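/- arXiv:2506.19648 — 5 statements merged into one kernel-verified Lean document; each statement's English description precedes it below -/
import Mathlib

section
/- Let X ~ Exp(λ) and Y ~ Hypoexp(μ₁, μ₂) be independent with μ₁ ≠ μ₂, Z = Y − X, Λ = {Y > X}, and w = μ₂(λ + μ₂) / ((μ₂ − μ₁)(λ + μ₁ + μ₂)). Then the conditional density of Z given Λ is f(z) = w·μ₁·exp(−μ₁ z) + (1−w)·μ₂·exp(−μ₂ z) for z > 0, i.e., a mixture of Exp(μ₁) and Exp(μ₂) with weights w and 1−w. -/
open MeasureTheory ProbabilityTheory Real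

/-- `X` is an exponential random variable with rate `r` under `μ`. -/
def IsExpRV {Ω : Type*} [MeasurableSpace Ω] (μ : Measure Ω) (r : ℝ) (X : Ω → ℝ) : Prop :=
  Measurable X ∧ ∀ t : ℝ, 0 ≤ t → μ {ω | X ω > t} = ENNReal.ofReal (Real.exp (-r * t))

/-- `X` is hypoexponential with (distinct) parameters `(a, b)` under `μ`, i.e. it is
distributed as the sum of independent `Exp(a)` and `Exp(b)` random variables. -/
def IsHypoexpRV {Ω : Type*} [MeasurableSpace Ω] (μ : Measure Ω) (a b : ℝ) (X : Ω → ℝ) : Prop :=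
  Measurable X ∧ ∀ t : ℝ, 0 ≤ t →
    μ {ω | X ω > t} =
      ENNReal.ofReal ((b * Real.exp (-a * t) - a * Real.exp (-b * t)) / (b - a))


open Set Filter Topology

section CondDensityHelpers

lemma expDeriv {b : ℝ} (hb : b ≠ 0) (x : ℝ) :
    HasDerivAt (fun x => -(Real.exp (-(b * x)) / b)) (Real.exp (-(b * x))) x := by
  have h1 : HasDerivAt (fun x : ℝ => -(b * x)) (-b) x := by
    simpa using ((hasDerivAt_id x).const_mul (-b))
  have h2 := (h1.exp.div_const b).neg
  have : -(Real.exp (-(b * x)) * -b / b) = Real.exp (-(b * x)) := by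
    field_simp
  rwa [this] at h2

lemma expIntegrable {b : ℝ} (hb : 0 < b) (c : ℝ) :
    IntegrableOn (fun x => Real.exp (-(b * x))) (Ioi c) := by
  have := exp_neg_integrableOn_Ioi c hb
  simpa [neg_mul] using this

lemma expIntIoi {b : ℝ} (hb : 0 < b) (c : ℝ) :
    ∫ x in Ioi c, Real.exp (-(b * x)) = Real.exp (-(b * c)) / b := by
  have h := MeasureTheory.integral_Ioi_of_hasDerivAt_of_tendsto
    (f := fun x => -(Real.exp (-(b * x)) / b)) (f' := fun x => Real.exp (-(b * x)))
    (a := c) (m := 0) ?_ (fun x _ => expDeriv hb.ne' x) (expIntegrable hb c) ?_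
  · rw [h]; ring
  · exact (Continuous.continuousWithinAt (by continuity))
  · have h3 : Tendsto (fun x : ℝ => -(b * x)) atTop atBot := by
      simpa using tendsto_neg_atBot_iff.mpr (tendsto_id.const_mul_atTop hb)
    have h4 := ((Real.tendsto_exp_atBot.comp h3).div_const b).neg
    simp only [zero_div, neg_zero, Function.comp_def] at h4
    exact h4

-- survival nonneg
lemma Snonneg {a b t : ℝ} (ha : 0 < a) (hb : 0 < b) (hne : a ≠ b) (ht : 0 ≤ t) :
    0 ≤ (b * Real.exp (-a * t) - a * Real.exp (-b * t)) / (b - a) := by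
  have e1 : (0:ℝ) < Real.exp (-a * t) := Real.exp_pos _
  have e2 : (0:ℝ) < Real.exp (-b * t) := Real.exp_pos _
  rcases hne.lt_or_gt with h | h
  · have e3 : Real.exp (-b * t) ≤ Real.exp (-a * t) :=
      Real.exp_le_exp.mpr (by nlinarith)
    apply div_nonneg ?_ (by linarith)
    nlinarith
  · have e3 : Real.exp (-a * t) ≤ Real.exp (-b * t) :=
      Real.exp_le_exp.mpr (by nlinarith)
    apply div_nonneg_of_nonpos ?_ (by linarith)
    nlinarith

end CondDensityHelpers

set_option maxHeartbeats 2000000 in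
/-- Let `X ~ Exp(λ)` and `Y ~ Hypoexp(μ₁, μ₂)` be independent with `μ₁ ≠ μ₂`,
`Z = Y - X`, `Λ = {Y > X}`, and `w = μ₂(λ+μ₂)/((μ₂-μ₁)(λ+μ₁+μ₂))`. Then the
conditional density of `Z` given `Λ` is
`f(z) = w μ₁ e^{-μ₁ z} + (1-w) μ₂ e^{-μ₂ z}` for `z > 0`. -/
theorem cond_density_diff_hypoexp_exp
    {Ω : Type*} [MeasurableSpace Ω] (P : Measure Ω) [IsProbabilityMeasure P]
    (lam μ₁ μ₂ : ℝ) (hlam : 0 < lam) (hμ₁ : 0 < μ₁) (hμ₂ : 0 < μ₂) (hne : μ₁ ≠ μ₂)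
    (X Y : Ω → ℝ)
    (hX : IsExpRV P lam X) (hY : IsHypoexpRV P μ₁ μ₂ Y)
    (hindep : IndepFun X Y P)
    (Z : Ω → ℝ) (hZ : Z = fun ω => Y ω - X ω)
    (Λ : Set Ω) (hΛ : Λ = {ω | Y ω > X ω})
    (w : ℝ) (hw : w = μ₂ * (lam + μ₂) / ((μ₂ - μ₁) * (lam + μ₁ + μ₂))) :
    ∀ s : ℝ, 0 ≤ s →
      (P[|Λ]) {ω | Z ω > s} =
        ENNReal.ofReal (∫ z in Set.Ioi s,
          (w * μ₁ * Real.exp (-μ₁ * z) + (1 - w) * μ₂ * Real.exp (-μ₂ * z))) := by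
  intro s hs
  obtain ⟨mX, hXs⟩ := hX
  obtain ⟨mY, hYs⟩ := hY
  set νX := P.map X with hνX
  set νY := P.map Y with hνY
  have instX : IsProbabilityMeasure νX := Measure.isProbabilityMeasure_map mX.aemeasurable
  have instY : IsProbabilityMeasure νY := Measure.isProbabilityMeasure_map mY.aemeasurable
  have hXIoi : ∀ t : ℝ, 0 ≤ t → νX (Ioi t) = ENNReal.ofReal (Real.exp (-lam * t)) := by
    intro t ht
    rw [hνX, Measure.map_apply mX measurableSet_Ioi]
    exact hXs t ht
  have hYIoi : ∀ t : ℝ, 0 ≤ t → νY (Ioi t) =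
      ENNReal.ofReal ((μ₂ * Real.exp (-μ₁ * t) - μ₁ * Real.exp (-μ₂ * t)) / (μ₂ - μ₁)) := by
    intro t ht
    rw [hνY, Measure.map_apply mY measurableSet_Ioi]
    exact hYs t ht
  -- law of X
  have hXlaw : νX = volume.withDensity (exponentialPDF lam) := by
    refine Measure.ext_of_Iic _ _ (fun t => ?_)
    rw [withDensity_apply _ measurableSet_Iic, lintegral_exponentialPDF_eq_antiDeriv hlam t]
    rcases le_or_gt 0 t with ht | ht
    · have h2 : νX (Iic t) = 1 - νX (Ioi t) := by
        have := measure_compl (μ := νX) (s := Ioi t) measurableSet_Ioi (measure_ne_top _ _)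
        rw [measure_univ, compl_Ioi] at this
        exact this
      rw [h2, hXIoi t ht, if_pos ht, ← ENNReal.ofReal_one,
        ← ENNReal.ofReal_sub _ (Real.exp_nonneg _)]
      congr 1
      ring_nf
    · rw [if_neg (not_le.mpr ht), ENNReal.ofReal_zero]
      have h0 : νX (Ioi 0) = 1 := by
        rw [hXIoi 0 le_rfl]; simp
      have h2 : νX (Iic 0) = 0 := by
        have := measure_compl (μ := νX) (s := Ioi (0:ℝ)) measurableSet_Ioi (measure_ne_top _ _)
        rw [measure_univ, h0, compl_Ioi] at this
        simpa using this
      exact measure_mono_null (Iic_subset_Iic.mpr ht.le) h2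
  have hprod : P.map (fun ω => (X ω, Y ω)) = νX.prod νY :=
    (ProbabilityTheory.indepFun_iff_map_prod_eq_prod_map_map mX.aemeasurable mY.aemeasurable).mp
      hindep
  -- key survival function of Z
  set G : ℝ → ℝ := fun u => lam * μ₂ * Real.exp (-μ₁ * u) / ((μ₂ - μ₁) * (lam + μ₁))
      - lam * μ₁ * Real.exp (-μ₂ * u) / ((μ₂ - μ₁) * (lam + μ₂)) with hG
  have hd1 : μ₂ - μ₁ ≠ 0 := sub_ne_zero_of_ne (Ne.symm hne)
  have hd2 : lam + μ₁ ≠ 0 := by positivity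
  have hd3 : lam + μ₂ ≠ 0 := by positivity
  have hd4 : lam + μ₁ + μ₂ ≠ 0 := by positivity
  have hkey : ∀ u : ℝ, 0 ≤ u → P {ω | Z ω > u} = ENNReal.ofReal (G u) := by
    intro u hu
    have hSm : MeasurableSet {p : ℝ × ℝ | u < p.2 - p.1} :=
      measurableSet_lt measurable_const (measurable_snd.sub measurable_fst)
    have h1 : P {ω | Z ω > u} = (νX.prod νY) {p : ℝ × ℝ | u < p.2 - p.1} := by
      rw [← hprod, Measure.map_apply (mX.prodMk mY) hSm, hZ]
      congr 1
    rw [h1, Measure.prod_apply hSm]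
    have h2 : ∀ x : ℝ, (Prod.mk x ⁻¹' {p : ℝ × ℝ | u < p.2 - p.1}) = Ioi (x + u) := by
      intro x; ext y
      simp only [Set.mem_preimage, Set.mem_setOf_eq, Set.mem_Ioi]
      constructor <;> intro h <;> linarith
    simp_rw [h2]
    rw [hXlaw]
    have hmg : Measurable fun x : ℝ => νY (Ioi (x + u)) := by
      have hanti : Antitone fun x : ℝ => νY (Ioi x) :=
        fun a b hab => measure_mono (Ioi_subset_Ioi hab)
      exact hanti.measurable.comp (measurable_add_const u)
    have hmf : Measurable (exponentialPDF lam) :=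
      (measurable_exponentialPDFReal lam).ennreal_ofReal
    rw [lintegral_withDensity_eq_lintegral_mul volume hmf hmg]
    simp only [Pi.mul_apply]
    rw [← lintegral_add_compl (fun x => exponentialPDF lam x * νY (Ioi (x + u)))
      (measurableSet_Ici (a := (0:ℝ)))]
    have hIio : ∫⁻ x in (Ici (0:ℝ))ᶜ, exponentialPDF lam x * νY (Ioi (x + u)) = 0 := by
      rw [compl_Ici]
      rw [setLIntegral_congr_fun measurableSet_Iio
        (fun x (hx : x < 0) => by
          rw [exponentialPDF_of_neg hx, zero_mul]), lintegral_zero]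
    -- pointwise description of the integrand on Ici 0
    have hfun : ∀ x : ℝ, 0 ≤ x → lam * Real.exp (-(lam * x)) *
        ((μ₂ * Real.exp (-μ₁ * (x + u)) - μ₁ * Real.exp (-μ₂ * (x + u))) / (μ₂ - μ₁)) =
        (lam * μ₂ * Real.exp (-μ₁ * u) / (μ₂ - μ₁)) * Real.exp (-((lam + μ₁) * x))
          - (lam * μ₁ * Real.exp (-μ₂ * u) / (μ₂ - μ₁)) * Real.exp (-((lam + μ₂) * x)) := by
      intro x _
      have e1 : Real.exp (-μ₁ * (x + u)) = Real.exp (-(μ₁ * x)) * Real.exp (-μ₁ * u) := by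
        rw [← Real.exp_add]; congr 1; ring
      have e2 : Real.exp (-μ₂ * (x + u)) = Real.exp (-(μ₂ * x)) * Real.exp (-μ₂ * u) := by
        rw [← Real.exp_add]; congr 1; ring
      have e3 : Real.exp (-((lam + μ₁) * x)) = Real.exp (-(lam * x)) * Real.exp (-(μ₁ * x)) := by
        rw [← Real.exp_add]; congr 1; ring
      have e4 : Real.exp (-((lam + μ₂) * x)) = Real.exp (-(lam * x)) * Real.exp (-(μ₂ * x)) := by
        rw [← Real.exp_add]; congr 1; ring
      rw [e1, e2, e3, e4]
      field_simp
    have hInt : IntegrableOn (fun x => lam * Real.exp (-(lam * x)) *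
        ((μ₂ * Real.exp (-μ₁ * (x + u)) - μ₁ * Real.exp (-μ₂ * (x + u))) / (μ₂ - μ₁)))
        (Ici (0:ℝ)) := by
      rw [integrableOn_Ici_iff_integrableOn_Ioi]
      apply IntegrableOn.congr_fun ?_ (fun x hx => (hfun x (le_of_lt hx)).symm) measurableSet_Ioi
      exact (((expIntegrable (by positivity : (0:ℝ) < lam + μ₁) 0).const_mul _).sub
        ((expIntegrable (by positivity : (0:ℝ) < lam + μ₂) 0).const_mul _))
    have hIci : ∫⁻ x in Ici (0:ℝ), exponentialPDF lam x * νY (Ioi (x + u)) =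
        ENNReal.ofReal (∫ x in Ici (0:ℝ), lam * Real.exp (-(lam * x)) *
          ((μ₂ * Real.exp (-μ₁ * (x + u)) - μ₁ * Real.exp (-μ₂ * (x + u))) / (μ₂ - μ₁))) := by
      rw [setLIntegral_congr_fun measurableSet_Ici
        (fun x (hx : 0 ≤ x) => ?_)]
      · exact (MeasureTheory.ofReal_integral_eq_lintegral_ofReal hInt
          ((ae_restrict_iff' measurableSet_Ici).mpr (ae_of_all _ fun x (hx : 0 ≤ x) =>
            mul_nonneg (mul_nonneg hlam.le (Real.exp_nonneg _))
              (Snonneg hμ₁ hμ₂ hne (by linarith))))).symm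
      · rw [exponentialPDF_of_nonneg hx, hYIoi _ (by linarith),
          ← ENNReal.ofReal_mul (mul_nonneg hlam.le (Real.exp_nonneg _))]
    rw [hIio, hIci, add_zero]
    congr 1
    rw [integral_Ici_eq_integral_Ioi]
    rw [setIntegral_congr_fun measurableSet_Ioi (fun x hx => hfun x (le_of_lt hx))]
    rw [integral_sub ((expIntegrable (by positivity : (0:ℝ) < lam + μ₁) 0).const_mul _)
      ((expIntegrable (by positivity : (0:ℝ) < lam + μ₂) 0).const_mul _),
      integral_const_mul, integral_const_mul,
      expIntIoi (by positivity : (0:ℝ) < lam + μ₁) 0,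
      expIntIoi (by positivity : (0:ℝ) < lam + μ₂) 0]
    simp only [hG, mul_zero, neg_zero, Real.exp_zero]
    field_simp
    try ring
  -- conditional probability computation
  have hΛZ : Λ = {ω | Z ω > 0} := by
    rw [hΛ, hZ]; ext ω; simp [sub_pos]
  have hmΛ : MeasurableSet Λ := by
    rw [hΛ]; exact measurableSet_lt mX mY
  have hPΛ : P Λ = ENNReal.ofReal (G 0) := by rw [hΛZ]; exact hkey 0 le_rfl
  rw [ProbabilityTheory.cond_apply hmΛ]
  have hinter : Λ ∩ {ω | Z ω > s} = {ω | Z ω > s} := by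
    rw [hΛZ]
    exact Set.inter_eq_self_of_subset_right (fun ω (hω : Z ω > s) => lt_of_le_of_lt hs hω)
  rw [hinter, hkey s hs, hPΛ]
  have hRHS : ∫ z in Ioi s, (w * μ₁ * Real.exp (-μ₁ * z) + (1 - w) * μ₂ * Real.exp (-μ₂ * z)) =
      w * Real.exp (-μ₁ * s) + (1 - w) * Real.exp (-μ₂ * s) := by
    have i1 : IntegrableOn (fun z => w * μ₁ * Real.exp (-μ₁ * z)) (Ioi s) := by
      simp only [neg_mul]
      exact (expIntegrable hμ₁ s).const_mul _
    have i2 : IntegrableOn (fun z => (1 - w) * μ₂ * Real.exp (-μ₂ * z)) (Ioi s) := by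
      simp only [neg_mul]
      exact (expIntegrable hμ₂ s).const_mul _
    rw [integral_add i1 i2]
    simp only [neg_mul]
    rw [integral_const_mul, integral_const_mul, expIntIoi hμ₁ s, expIntIoi hμ₂ s]
    field_simp
  rw [hRHS]
  -- final algebra
  have hG0 : G 0 = lam * (lam + μ₁ + μ₂) / ((lam + μ₁) * (lam + μ₂)) := by
    simp only [hG, mul_zero, neg_zero, Real.exp_zero]
    field_simp
    try ring
  have hg0 : 0 < G 0 := by rw [hG0]; positivity
  have hFnn : 0 ≤ w * Real.exp (-μ₁ * s) + (1 - w) * Real.exp (-μ₂ * s) := by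
    have hFeq : w * Real.exp (-μ₁ * s) + (1 - w) * Real.exp (-μ₂ * s) =
        (μ₂ * (lam + μ₂) * Real.exp (-μ₁ * s) - μ₁ * (lam + μ₁) * Real.exp (-μ₂ * s)) /
          ((μ₂ - μ₁) * (lam + μ₁ + μ₂)) := by
      rw [hw]; field_simp; ring
    rw [hFeq]
    have e1 : (0:ℝ) < Real.exp (-μ₁ * s) := Real.exp_pos _
    have e2 : (0:ℝ) < Real.exp (-μ₂ * s) := Real.exp_pos _
    rcases hne.lt_or_gt with h | h
    · have e3 : Real.exp (-μ₂ * s) ≤ Real.exp (-μ₁ * s) :=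
        Real.exp_le_exp.mpr (by nlinarith)
      have k1 : μ₁ * (lam + μ₁) < μ₂ * (lam + μ₂) := by nlinarith
      apply div_nonneg ?_ (by nlinarith)
      have k2 := mul_le_mul_of_nonneg_left e3 (le_of_lt (by positivity : (0:ℝ) < μ₂ * (lam + μ₂)))
      have k3 := mul_lt_mul_of_pos_right k1 e2
      linarith
    · have e3 : Real.exp (-μ₁ * s) ≤ Real.exp (-μ₂ * s) :=
        Real.exp_le_exp.mpr (by nlinarith)
      have k1 : μ₂ * (lam + μ₂) < μ₁ * (lam + μ₁) := by nlinarith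
      apply div_nonneg_of_nonpos ?_ (by nlinarith)
      have k2 := mul_le_mul_of_nonneg_left e3 (le_of_lt (by positivity : (0:ℝ) < μ₁ * (lam + μ₁)))
      have k3 := mul_lt_mul_of_pos_right k1 e1
      linarith
  have hgs : G s = (w * Real.exp (-μ₁ * s) + (1 - w) * Real.exp (-μ₂ * s)) * G 0 := by
    simp only [hG, hw, mul_zero, neg_zero, Real.exp_zero]
    field_simp
    try ring
  rw [hgs, ENNReal.ofReal_mul hFnn, mul_comm (ENNReal.ofReal _) (ENNReal.ofReal (G 0)),
    ← mul_assoc, ENNReal.inv_mul_cancel (ENNReal.ofReal_pos.mpr hg0).ne' ENNReal.ofReal_ne_top,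
    one_mul]
end

section
/- Let X ~ Exp(λ) and Y ~ Hypoexp(μ₁, μ₂) be independent with μ₁ ≠ μ₂, Λ = {Y > X}, and w = μ₂(λ + μ₂)/((μ₂ − μ₁)(λ + μ₁ + μ₂)). Then the conditional density of X given Λ is f(x) = w(λ+μ₁)exp(−(λ+μ₁)x) + (1−w)(λ+μ₂)exp(−(λ+μ₂)x) for x > 0. -/
open MeasureTheory ProbabilityTheory Real

lemma integral_exp_neg_mul_Ioi' {a : ℝ} (ha : 0 < a) (s : ℝ) :
    ∫ x in Set.Ioi s, Real.exp (-a * x) = Real.exp (-a * s) / a := by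
  have hderiv : ∀ x ∈ Set.Ici s,
      HasDerivAt (fun y => -Real.exp (-a * y) / a) (Real.exp (-a * x)) x := by
    intro x _
    have h : HasDerivAt (fun y : ℝ => -a * y) (-a) x := by
      simpa using (hasDerivAt_id x).const_mul (-a)
    have h2 := (h.exp.neg).div_const a
    rw [show Real.exp (-a * x) = -(Real.exp (-a * x) * -a) / a by
      rw [mul_neg, neg_neg, mul_div_assoc, div_self ha.ne', mul_one]]
    exact h2
  have hint : MeasureTheory.IntegrableOn (fun x => Real.exp (-a * x)) (Set.Ioi s) :=
    exp_neg_integrableOn_Ioi s ha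
  have htend : Filter.Tendsto (fun y => -Real.exp (-a * y) / a) Filter.atTop (nhds 0) := by
    have h1 : Filter.Tendsto (fun y : ℝ => -a * y) Filter.atTop Filter.atBot := by
      have hid : Filter.Tendsto (fun y : ℝ => y) Filter.atTop Filter.atTop := Filter.tendsto_id
      have h0 := hid.const_mul_atTop ha
      have h2 := (Filter.tendsto_neg_atTop_atBot (G := ℝ)).comp h0
      simpa [Function.comp, neg_mul] using h0
    have h2 := Real.tendsto_exp_atBot.comp h1
    have h3 := (h2.neg).div_const a
    simpa using h3
  have := MeasureTheory.integral_Ioi_of_hasDerivAt_of_tendsto' hderiv hint htend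
  rw [this]
  ring

/-- Let `X ~ Exp(λ)` and `Y ~ Hypoexp(μ₁, μ₂)` be independent with `μ₁ ≠ μ₂`,
`Λ = {Y > X}`, and `w = μ₂(λ+μ₂)/((μ₂-μ₁)(λ+μ₁+μ₂))`. Then the conditional density of
`X` given `Λ` is `f(x) = w(λ+μ₁)e^{-(λ+μ₁)x} + (1-w)(λ+μ₂)e^{-(λ+μ₂)x}` for `x > 0`. -/
theorem cond_density_exp_given_hypoexp_larger
    {Ω : Type*} [MeasurableSpace Ω] (P : Measure Ω) [IsProbabilityMeasure P]
    (lam μ₁ μ₂ : ℝ) (hlam : 0 < lam) (hμ₁ : 0 < μ₁) (hμ₂ : 0 < μ₂) (hne : μ₁ ≠ μ₂)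
    (X Y : Ω → ℝ)
    (hX : IsExpRV P lam X) (hY : IsHypoexpRV P μ₁ μ₂ Y)
    (hindep : IndepFun X Y P)
    (Λ : Set Ω) (hΛ : Λ = {ω | Y ω > X ω})
    (w : ℝ) (hw : w = μ₂ * (lam + μ₂) / ((μ₂ - μ₁) * (lam + μ₁ + μ₂))) :
    ∀ s : ℝ, 0 ≤ s →
      (P[|Λ]) {ω | X ω > s} =
        ENNReal.ofReal (∫ x in Set.Ioi s,
          (w * (lam + μ₁) * Real.exp (-(lam + μ₁) * x) +
            (1 - w) * (lam + μ₂) * Real.exp (-(lam + μ₂) * x))) := by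
  have hXm := hX.1
  have hYm := hY.1
  have hμne : μ₂ - μ₁ ≠ 0 := sub_ne_zero.mpr hne.symm
  have ha : (0:ℝ) < lam + μ₁ := by linarith
  have hb : (0:ℝ) < lam + μ₂ := by linarith
  have hane : lam + μ₁ ≠ 0 := ne_of_gt ha
  have hbne : lam + μ₂ ≠ 0 := ne_of_gt hb
  have habne : lam + μ₁ + μ₂ ≠ 0 := by positivity
  haveI hPX : IsProbabilityMeasure (P.map X) := Measure.isProbabilityMeasure_map hXm.aemeasurable
  haveI hPY : IsProbabilityMeasure (P.map Y) := Measure.isProbabilityMeasure_map hYm.aemeasurable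
  have hmapX_Ioi : ∀ t : ℝ, 0 ≤ t →
      P.map X (Set.Ioi t) = ENNReal.ofReal (Real.exp (-lam * t)) := by
    intro t ht
    rw [Measure.map_apply hXm measurableSet_Ioi]
    exact hX.2 t ht
  have hmapY_Ioi : ∀ t : ℝ, 0 ≤ t →
      P.map Y (Set.Ioi t) =
        ENNReal.ofReal ((μ₂ * Real.exp (-μ₁ * t) - μ₁ * Real.exp (-μ₂ * t)) / (μ₂ - μ₁)) := by
    intro t ht
    rw [Measure.map_apply hYm measurableSet_Ioi]
    exact hY.2 t ht
  -- identify law of X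
  have hνX : P.map X = expMeasure lam := by
    haveI := isProbabilityMeasure_expMeasure hlam
    refine Measure.ext_of_Iic _ _ (fun t => ?_)
    have hre : expMeasure lam (Set.Iic t) = ∫⁻ y in Set.Iic t, exponentialPDF lam y :=
      withDensity_apply _ measurableSet_Iic
    have hcompl : (Set.Iic t) = (Set.Ioi t)ᶜ := Set.compl_Ioi.symm
    by_cases ht : 0 ≤ t
    · rw [hre, lintegral_exponentialPDF_eq_antiDeriv hlam t, if_pos ht, hcompl,
        measure_compl measurableSet_Ioi (measure_ne_top _ _), measure_univ, hmapX_Ioi t ht,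
        show -(lam * t) = -lam * t by ring,
        ENNReal.ofReal_sub _ (Real.exp_nonneg _), ENNReal.ofReal_one]
    · have h00 : P.map X (Set.Iic 0) = 0 := by
        rw [show Set.Iic (0:ℝ) = (Set.Ioi 0)ᶜ from Set.compl_Ioi.symm,
          measure_compl measurableSet_Ioi (measure_ne_top _ _), measure_univ,
          hmapX_Ioi 0 le_rfl]
        simp
      have h0 : P.map X (Set.Iic t) = 0 :=
        le_antisymm (le_trans (measure_mono (Set.Iic_subset_Iic.mpr (le_of_not_ge ht))) h00.le)
          zero_le
      rw [h0, hre, lintegral_exponentialPDF_eq_antiDeriv hlam t, if_neg ht, ENNReal.ofReal_zero]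
  have hjoint : P.map (fun ω => (X ω, Y ω)) = (P.map X).prod (P.map Y) :=
    (indepFun_iff_map_prod_eq_prod_map_map hXm.aemeasurable hYm.aemeasurable).mp hindep
  -- algebraic identity for thedensity product
  have halg : ∀ x : ℝ,
      lam * Real.exp (-(lam * x)) *
        ((μ₂ * Real.exp (-μ₁ * x) - μ₁ * Real.exp (-μ₂ * x)) / (μ₂ - μ₁)) =
      lam * μ₂ / (μ₂ - μ₁) * Real.exp (-(lam + μ₁) * x)
        - lam * μ₁ / (μ₂ - μ₁) * Real.exp (-(lam + μ₂) * x) := by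
    intro x
    have e1 : Real.exp (-(lam + μ₁) * x) = Real.exp (-(lam * x)) * Real.exp (-μ₁ * x) := by
      rw [← Real.exp_add]; ring_nf
    have e2 : Real.exp (-(lam + μ₂) * x) = Real.exp (-(lam * x)) * Real.exp (-μ₂ * x) := by
      rw [← Real.exp_add]; ring_nf
    rw [e1, e2]
    field_simp
  have htail_nonneg : ∀ x : ℝ, 0 ≤ x →
      0 ≤ (μ₂ * Real.exp (-μ₁ * x) - μ₁ * Real.exp (-μ₂ * x)) / (μ₂ - μ₁) := by
    intro x hx
    rcases hne.lt_or_gt with h | h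
    · apply div_nonneg _ (by linarith)
      have hee : Real.exp (-μ₂ * x) ≤ Real.exp (-μ₁ * x) :=
        Real.exp_le_exp.mpr (by nlinarith)
      nlinarith [Real.exp_pos (-μ₂ * x)]
    · refine div_nonneg_iff.mpr (Or.inr ⟨?_, by linarith⟩)
      have hee : Real.exp (-μ₁ * x) ≤ Real.exp (-μ₂ * x) :=
        Real.exp_le_exp.mpr (by nlinarith)
      nlinarith [Real.exp_pos (-μ₁ * x)]
  have hΛm : MeasurableSet Λ := by rw [hΛ]; exact measurableSet_lt hXm hYm
  have hint1 : ∀ s : ℝ, MeasureTheory.IntegrableOn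
      (fun x => Real.exp (-(lam + μ₁) * x)) (Set.Ioi s) :=
    fun s => exp_neg_integrableOn_Ioi s ha
  have hint2 : ∀ s : ℝ, MeasureTheory.IntegrableOn
      (fun x => Real.exp (-(lam + μ₂) * x)) (Set.Ioi s) :=
    fun s => exp_neg_integrableOn_Ioi s hb
  -- key computation of P (Λ ∩ {X > s})
  have key : ∀ s : ℝ, 0 ≤ s → P (Λ ∩ {ω | X ω > s}) =
      ENNReal.ofReal (lam * μ₂ / ((μ₂ - μ₁) * (lam + μ₁)) * Real.exp (-(lam + μ₁) * s)
        - lam * μ₁ / ((μ₂ - μ₁) * (lam + μ₂)) * Real.exp (-(lam + μ₂) * s)) := by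
    intro s hs
    have hE : MeasurableSet {p : ℝ × ℝ | s < p.1 ∧ p.1 < p.2} :=
      (measurableSet_lt measurable_const measurable_fst).inter
        (measurableSet_lt measurable_fst measurable_snd)
    have hpre : Λ ∩ {ω | X ω > s} =
        (fun ω => (X ω, Y ω)) ⁻¹' {p : ℝ × ℝ | s < p.1 ∧ p.1 < p.2} := by
      rw [hΛ]; ext ω
      simp only [Set.mem_inter_iff, Set.mem_setOf_eq, Set.mem_preimage]
      exact ⟨fun ⟨h1, h2⟩ => ⟨h2, h1⟩, fun ⟨h1, h2⟩ => ⟨h2, h1⟩⟩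
    rw [hpre, ← Measure.map_apply (hXm.prodMk hYm) hE, hjoint, Measure.prod_apply hE]
    have hslice : (fun x => (P.map Y) (Prod.mk x ⁻¹' {p : ℝ × ℝ | s < p.1 ∧ p.1 < p.2}))
        = (Set.Ioi s).indicator (fun x => (P.map Y) (Set.Ioi x)) := by
      funext x
      by_cases hx : s < x
      · rw [Set.indicator_of_mem (Set.mem_Ioi.mpr hx)]
        congr 1
        ext y
        simp [Set.mem_preimage, Set.mem_Ioi, hx]
      · rw [Set.indicator_of_notMem (by simpa using hx)]
        have he : (Prod.mk x ⁻¹' {p : ℝ × ℝ | s < p.1 ∧ p.1 < p.2}) = ∅ := by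
          ext y; simp [hx]
        rw [he, measure_empty]
    rw [hslice, lintegral_indicator measurableSet_Ioi]
    have h1 : ∫⁻ x in Set.Ioi s, (P.map Y) (Set.Ioi x) ∂(P.map X)
        = ∫⁻ x in Set.Ioi s,
            ENNReal.ofReal ((μ₂ * Real.exp (-μ₁ * x) - μ₁ * Real.exp (-μ₂ * x)) / (μ₂ - μ₁))
            ∂(P.map X) := by
      refine setLIntegral_congr_fun measurableSet_Ioi (fun x hx => ?_)
      exact hmapY_Ioi x (le_trans hs (le_of_lt hx))
    have hmeasPDF : Measurable (exponentialPDF lam) :=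
      (measurable_exponentialPDFReal lam).ennreal_ofReal
    have hmeasg : Measurable (fun x : ℝ =>
        ENNReal.ofReal ((μ₂ * Real.exp (-μ₁ * x) - μ₁ * Real.exp (-μ₂ * x)) / (μ₂ - μ₁))) := by
      apply Measurable.ennreal_ofReal
      fun_prop
    rw [h1, hνX, show expMeasure lam = (volume : Measure ℝ).withDensity (exponentialPDF lam)
        from rfl,
      restrict_withDensity measurableSet_Ioi,
      lintegral_withDensity_eq_lintegral_mul _ hmeasPDF hmeasg]
    have h2 : ∫⁻ x in Set.Ioi s, ((exponentialPDF lam) * fun x =>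
        ENNReal.ofReal ((μ₂ * Real.exp (-μ₁ * x) - μ₁ * Real.exp (-μ₂ * x)) / (μ₂ - μ₁))) x
        = ∫⁻ x in Set.Ioi s, ENNReal.ofReal
            (lam * μ₂ / (μ₂ - μ₁) * Real.exp (-(lam + μ₁) * x)
              - lam * μ₁ / (μ₂ - μ₁) * Real.exp (-(lam + μ₂) * x)) := by
      refine setLIntegral_congr_fun measurableSet_Ioi (fun x hx => ?_)
      have hx0 : (0:ℝ) ≤ x := le_trans hs (le_of_lt hx)
      simp only [Pi.mul_apply]
      rw [exponentialPDF_of_nonneg hx0, ← ENNReal.ofReal_mul (by positivity)]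
      rw [halg x]
    rw [h2]
    have hfint : MeasureTheory.Integrable
        (fun x => lam * μ₂ / (μ₂ - μ₁) * Real.exp (-(lam + μ₁) * x)
          - lam * μ₁ / (μ₂ - μ₁) * Real.exp (-(lam + μ₂) * x))
        (volume.restrict (Set.Ioi s)) :=
      ((hint1 s).const_mul _).sub ((hint2 s).const_mul _)
    have hfnn : 0 ≤ᵐ[volume.restrict (Set.Ioi s)]
        (fun x => lam * μ₂ / (μ₂ - μ₁) * Real.exp (-(lam + μ₁) * x)
          - lam * μ₁ / (μ₂ - μ₁) * Real.exp (-(lam + μ₂) * x)) := by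
      refine (ae_restrict_iff' measurableSet_Ioi).mpr (Filter.Eventually.of_forall fun x hx => ?_)
      have hx0 : (0:ℝ) ≤ x := le_trans hs (le_of_lt hx)
      simp only [Pi.zero_apply]
      rw [← halg x]
      have := htail_nonneg x hx0
      positivity
    rw [← MeasureTheory.ofReal_integral_eq_lintegral_ofReal hfint hfnn]
    congr 1
    rw [MeasureTheory.integral_sub ((hint1 s).const_mul _) ((hint2 s).const_mul _),
      MeasureTheory.integral_const_mul, MeasureTheory.integral_const_mul,
      integral_exp_neg_mul_Ioi' ha s, integral_exp_neg_mul_Ioi' hb s]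
    field_simp
  -- probability of Λ
  have hX0 : P {ω | X ω ≤ 0} = 0 := by
    have h1 : P {ω | X ω > 0} = 1 := by
      rw [hX.2 0 le_rfl]; simp
    have he : {ω | X ω ≤ 0} = {ω | X ω > 0}ᶜ := by
      ext ω; simp [not_lt]
    rw [he, measure_compl (measurableSet_lt measurable_const hXm) (measure_ne_top _ _),
      measure_univ, h1, tsub_self]
  have hp_eq : lam * μ₂ / ((μ₂ - μ₁) * (lam + μ₁)) - lam * μ₁ / ((μ₂ - μ₁) * (lam + μ₂))
      = lam * (lam + μ₁ + μ₂) / ((lam + μ₁) * (lam + μ₂)) := by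
    field_simp
    ring
  have hp_pos : (0:ℝ) < lam * (lam + μ₁ + μ₂) / ((lam + μ₁) * (lam + μ₂)) := by positivity
  have hPΛ : P Λ = ENNReal.ofReal (lam * (lam + μ₁ + μ₂) / ((lam + μ₁) * (lam + μ₂))) := by
    have h1 : P Λ = P (Λ ∩ {ω | X ω > 0}) := by
      refine le_antisymm ?_ (measure_mono Set.inter_subset_left)
      calc P Λ ≤ P ((Λ ∩ {ω | X ω > 0}) ∪ {ω | X ω ≤ 0}) := by
            refine measure_mono (fun ω hω => ?_)
            by_cases h : X ω > 0
            · exact Or.inl ⟨hω, h⟩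
            · exact Or.inr (not_lt.mp h)
        _ ≤ P (Λ ∩ {ω | X ω > 0}) + P {ω | X ω ≤ 0} := measure_union_le _ _
        _ = P (Λ ∩ {ω | X ω > 0}) := by rw [hX0, add_zero]
    rw [h1, key 0 le_rfl]
    rw [← hp_eq]
    norm_num
  intro s hs
  have hRHS : ∫ x in Set.Ioi s,
      (w * (lam + μ₁) * Real.exp (-(lam + μ₁) * x) +
        (1 - w) * (lam + μ₂) * Real.exp (-(lam + μ₂) * x))
      = w * Real.exp (-(lam + μ₁) * s) + (1 - w) * Real.exp (-(lam + μ₂) * s) := by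
    rw [MeasureTheory.integral_add ((hint1 s).const_mul _) ((hint2 s).const_mul _),
      MeasureTheory.integral_const_mul, MeasureTheory.integral_const_mul,
      integral_exp_neg_mul_Ioi' ha s, integral_exp_neg_mul_Ioi' hb s]
    field_simp
  rw [hRHS, cond_apply hΛm, key s hs, hPΛ, ← ENNReal.div_eq_inv_mul,
    ← ENNReal.ofReal_div_of_pos hp_pos]
  congr 1
  subst hw
  rw [div_eq_iff (ne_of_gt hp_pos)]
  field_simp
  ring
end

section
/- Let X ~ Exp(λ) and Y ~ Hypoexp(μ₁, μ₂) be independent with μ₁ ≠ μ₂, Z = Y − X, Λ = {Y > X}, and w = μ₂(λ+μ₂)/((μ₂−μ₁)(λ+μ₁+μ₂)). Then the conditional joint density of (Z, X) given Λ is f(z,x) = w·μ₁e^{−μ₁z}·(λ+μ₁)e^{−(λ+μ₁)x} + (1−w)·μ₂e^{−μ₂z}·(λ+μ₂)e^{−(λ+μ₂)x} for z, x > 0; in particular Z and X are not conditionally independent given Λ (since this joint density differs from the product of the conditional marginals). -/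
open MeasureTheory ProbabilityTheory Real

section Aux
open Set Filter Topology

lemma aux_expint {c : ℝ} (hc : 0 < c) (a : ℝ) :
    ∫ x in Set.Ioi a, Real.exp (-c * x) = Real.exp (-c * a) / c := by
  have h := integral_Ioi_of_hasDerivAt_of_tendsto'
    (f := fun x : ℝ => -Real.exp (-c * x) / c) (f' := fun x => Real.exp (-c * x))
    (a := a) (m := 0) ?_ (exp_neg_integrableOn_Ioi a hc) ?_
  · rw [h]; ring
  · intro x _
    have : HasDerivAt (fun x : ℝ => -c * x) (-c) x := by
      simpa using (hasDerivAt_id x).const_mul (-c)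
    have h2 := ((this.exp).neg).div_const c
    refine h2.congr_deriv ?_
    field_simp
  · have h1 : Tendsto (fun x : ℝ => -c * x) atTop atBot :=
      (tendsto_const_mul_atBot_of_neg (by linarith)).2 tendsto_id
    have h2 : Tendsto (fun x : ℝ => Real.exp (-c * x)) atTop (𝓝 0) :=
      Real.tendsto_exp_atBot.comp h1
    have := (h2.neg).div_const c
    simpa using this

lemma aux_integrable {c : ℝ} (hc : 0 < c) (p a : ℝ) :
    IntegrableOn (fun x => p * Real.exp (-c * x)) (Set.Ioi a) :=
  (exp_neg_integrableOn_Ioi a hc).const_mul p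

lemma aux_int2 {c d : ℝ} (hc : 0 < c) (hd : 0 < d) (p q a : ℝ) :
    ∫ x in Set.Ioi a, (p * Real.exp (-c * x) + q * Real.exp (-d * x))
      = p * Real.exp (-c * a) / c + q * Real.exp (-d * a) / d := by
  rw [integral_add (aux_integrable hc p a) (aux_integrable hd q a),
    integral_const_mul, integral_const_mul, aux_expint hc, aux_expint hd]
  ring


lemma aux_law {Ω : Type*} [MeasurableSpace Ω] (P : Measure Ω) [IsProbabilityMeasure P]
    {r : ℝ} (hr : 0 < r) {X : Ω → ℝ} (hX : IsExpRV P r X) :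
    P.map X = volume.withDensity (exponentialPDF r) := by
  obtain ⟨hXm, hXs⟩ := hX
  have hexp : volume.withDensity (exponentialPDF r) = expMeasure r := rfl
  haveI : IsProbabilityMeasure (P.map X) := Measure.isProbabilityMeasure_map hXm.aemeasurable
  haveI : IsProbabilityMeasure (expMeasure r) := isProbabilityMeasure_expMeasure hr
  refine Measure.ext_of_Iic _ _ (fun t => ?_)
  have hmap : (P.map X) (Iic t) = P {ω | X ω ≤ t} := by
    rw [Measure.map_apply hXm measurableSet_Iic]; rfl
  have hcompl : {ω | X ω ≤ t} = {ω | X ω > t}ᶜ := by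
    ext ω; simp [not_lt]
  have hmeas : MeasurableSet {ω | X ω > t} := hXm measurableSet_Ioi
  have hrhs : (volume.withDensity (exponentialPDF r)) (Iic t)
      = ENNReal.ofReal (if 0 ≤ t then 1 - Real.exp (-(r * t)) else 0) := by
    rw [withDensity_apply _ measurableSet_Iic]
    exact lintegral_exponentialPDF_eq_antiDeriv hr t
  rw [hmap, hrhs]
  by_cases ht : 0 ≤ t
  · rw [hcompl, prob_compl_eq_one_sub hmeas, hXs t ht, if_pos ht]
    rw [ENNReal.ofReal_sub _ (le_of_lt (Real.exp_pos _)), ENNReal.ofReal_one, neg_mul]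
  · rw [if_neg ht, ENNReal.ofReal_zero]
    have h0 : P {ω | X ω ≤ 0} = 0 := by
      have : {ω | X ω ≤ 0} = {ω | X ω > 0}ᶜ := by ext ω; simp [not_lt]
      have hmeas0 : MeasurableSet {ω | X ω > 0} := hXm measurableSet_Ioi
      rw [this, prob_compl_eq_one_sub hmeas0, hXs 0 le_rfl]
      simp
    apply measure_mono_null _ h0
    intro ω hω
    simp only [Set.mem_setOf_eq] at *
    linarith

lemma aux_Hnonneg {μ₁ μ₂ : ℝ} (h1 : 0 < μ₁) (hlt : μ₁ < μ₂) {t : ℝ} (ht : 0 ≤ t) :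
    0 ≤ (μ₂ * Real.exp (-μ₁ * t) - μ₁ * Real.exp (-μ₂ * t)) / (μ₂ - μ₁) := by
  apply div_nonneg _ (by linarith)
  have : μ₁ * Real.exp (-μ₂ * t) ≤ μ₂ * Real.exp (-μ₁ * t) := by
    apply mul_le_mul hlt.le (Real.exp_le_exp.2 (by nlinarith)) (le_of_lt (Real.exp_pos _)) (by linarith)
  linarith


lemma aux_key {Ω : Type*} [MeasurableSpace Ω] (P : Measure Ω) [IsProbabilityMeasure P]
    (lam μ₁ μ₂ : ℝ) (hlam : 0 < lam) (hμ₁ : 0 < μ₁) (hμ₂ : 0 < μ₂) (hlt : μ₁ < μ₂)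
    (X Y : Ω → ℝ) (hX : IsExpRV P lam X) (hY : IsHypoexpRV P μ₁ μ₂ Y)
    (hindep : IndepFun X Y P) (s x₀ : ℝ) (hs : 0 ≤ s) (hx₀ : 0 ≤ x₀) :
    P {ω | Y ω - X ω > s ∧ X ω > x₀} =
      ENNReal.ofReal
        ((lam * μ₂ * Real.exp (-μ₁ * s) / (μ₂ - μ₁)) * Real.exp (-(lam + μ₁) * x₀) / (lam + μ₁)
          + (-(lam * μ₁ * Real.exp (-μ₂ * s) / (μ₂ - μ₁))) * Real.exp (-(lam + μ₂) * x₀) / (lam + μ₂)) := by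
  obtain ⟨hXm, hXs⟩ := hX
  have hYm := hY.1
  have hYs := hY.2
  set p : ℝ := lam * μ₂ * Real.exp (-μ₁ * s) / (μ₂ - μ₁) with hp
  set q : ℝ := -(lam * μ₁ * Real.exp (-μ₂ * s) / (μ₂ - μ₁)) with hq
  set c : ℝ := lam + μ₁ with hc
  set d : ℝ := lam + μ₂ with hd
  have hcpos : 0 < c := by rw [hc]; linarith
  have hdpos : 0 < d := by rw [hd]; linarith
  haveI : IsProbabilityMeasure (P.map Y) := Measure.isProbabilityMeasure_map hYm.aemeasurable
  haveI : IsProbabilityMeasure (P.map X) := Measure.isProbabilityMeasure_map hXm.aemeasurable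
  have hprod : P.map (fun ω => (X ω, Y ω)) = (P.map X).prod (P.map Y) :=
    (indepFun_iff_map_prod_eq_prod_map_map hXm.aemeasurable hYm.aemeasurable).mp hindep
  set S : Set (ℝ × ℝ) := {pr : ℝ × ℝ | pr.2 - pr.1 > s ∧ pr.1 > x₀} with hSdef
  have hS : MeasurableSet S := by
    apply MeasurableSet.inter
    · exact measurableSet_lt measurable_const (measurable_snd.sub measurable_fst)
    · exact measurableSet_lt measurable_const measurable_fst
  have hset : {ω | Y ω - X ω > s ∧ X ω > x₀} = (fun ω => (X ω, Y ω)) ⁻¹' S := rfl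
  rw [hset, ← Measure.map_apply (hXm.prodMk hYm) hS, hprod, Measure.prod_apply hS]
  have hsec : ∀ x : ℝ, (P.map Y) (Prod.mk x ⁻¹' S)
      = (Ioi x₀).indicator (fun x => (P.map Y) (Ioi (s + x))) x := by
    intro x
    by_cases hx : x₀ < x
    · rw [Set.indicator_of_mem (Set.mem_Ioi.2 hx)]
      congr 1
      ext y
      simp only [hSdef, Set.mem_preimage, Set.mem_setOf_eq, Set.mem_Ioi]
      constructor
      · rintro ⟨h1, _⟩; linarith
      · intro h1; exact ⟨by linarith, hx⟩
    · rw [Set.indicator_of_notMem (fun h => hx (Set.mem_Ioi.1 h))]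
      have : Prod.mk x ⁻¹' S = ∅ := by
        ext y
        simp only [hSdef, Set.mem_preimage, Set.mem_setOf_eq, Set.mem_empty_iff_false, iff_false]
        rintro ⟨_, h2⟩; exact hx h2
      rw [this, measure_empty]
  rw [lintegral_congr hsec, lintegral_indicator measurableSet_Ioi]
  rw [aux_law P hlam ⟨hXm, hXs⟩]
  have hgmeas : Measurable (fun x : ℝ => (P.map Y) (Ioi (s + x))) := by
    apply Antitone.measurable
    intro a b hab
    exact measure_mono (fun y hy => lt_of_le_of_lt (by linarith [Set.mem_Ioi.1 hy] : s + a ≤ s + b) hy)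
  have hpdfm : Measurable (exponentialPDF lam) := by
    have : exponentialPDF lam = fun x => ENNReal.ofReal (exponentialPDFReal lam x) := rfl
    rw [this]
    exact (measurable_exponentialPDFReal lam).ennreal_ofReal
  rw [setLIntegral_withDensity_eq_setLIntegral_mul _ hpdfm hgmeas measurableSet_Ioi]
  have hμne : μ₂ - μ₁ ≠ 0 := by linarith
  have hiden : ∀ x : ℝ, lam * Real.exp (-(lam * x)) *
      ((μ₂ * Real.exp (-μ₁ * (s + x)) - μ₁ * Real.exp (-μ₂ * (s + x))) / (μ₂ - μ₁))
      = p * Real.exp (-c * x) + q * Real.exp (-d * x) := by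
    intro x
    have e1 : Real.exp (-μ₁ * (s + x)) = Real.exp (-μ₁ * s) * Real.exp (-μ₁ * x) := by
      rw [← Real.exp_add]; ring_nf
    have e2 : Real.exp (-μ₂ * (s + x)) = Real.exp (-μ₂ * s) * Real.exp (-μ₂ * x) := by
      rw [← Real.exp_add]; ring_nf
    have e3 : Real.exp (-c * x) = Real.exp (-(lam * x)) * Real.exp (-μ₁ * x) := by
      rw [← Real.exp_add, hc]; ring_nf
    have e4 : Real.exp (-d * x) = Real.exp (-(lam * x)) * Real.exp (-μ₂ * x) := by
      rw [← Real.exp_add, hd]; ring_nf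
    rw [e1, e2, e3, e4, hp, hq]
    field_simp
    ring
  have hptwise : ∀ x ∈ Ioi x₀, (exponentialPDF lam * fun x => (P.map Y) (Ioi (s + x))) x
      = ENNReal.ofReal (p * Real.exp (-c * x) + q * Real.exp (-d * x)) := by
    intro x hx
    have hx0 : (0:ℝ) ≤ x := le_trans hx₀ (le_of_lt (Set.mem_Ioi.1 hx))
    have hsx : (0:ℝ) ≤ s + x := by linarith
    have hmapY : (P.map Y) (Ioi (s + x))
        = ENNReal.ofReal ((μ₂ * Real.exp (-μ₁ * (s + x)) - μ₁ * Real.exp (-μ₂ * (s + x))) / (μ₂ - μ₁)) := by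
      rw [Measure.map_apply hYm measurableSet_Ioi]
      exact hYs (s + x) hsx
    simp only [Pi.mul_apply]
    rw [hmapY, exponentialPDF_of_nonneg hx0, ← ENNReal.ofReal_mul (by positivity), hiden x]
  rw [setLIntegral_congr_fun measurableSet_Ioi hptwise]
  have hInt : IntegrableOn (fun x => p * Real.exp (-c * x) + q * Real.exp (-d * x)) (Ioi x₀) :=
    (aux_integrable hcpos p x₀).add (aux_integrable hdpos q x₀)
  have hnn : 0 ≤ᵐ[volume.restrict (Ioi x₀)] fun x => p * Real.exp (-c * x) + q * Real.exp (-d * x) := by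
    refine (ae_restrict_iff' measurableSet_Ioi).2 (ae_of_all _ (fun x hx => ?_))
    have hx0 : (0:ℝ) ≤ x := le_trans hx₀ (le_of_lt (Set.mem_Ioi.1 hx))
    have hsx : (0:ℝ) ≤ s + x := by linarith
    simp only [Pi.zero_apply]
    show 0 ≤ p * Real.exp (-c * x) + q * Real.exp (-d * x)
    rw [← hiden x]
    exact mul_nonneg (by positivity) (aux_Hnonneg hμ₁ hlt hsx)
  rw [← ofReal_integral_eq_lintegral_ofReal hInt hnn, aux_int2 hcpos hdpos]


theorem main_case
    {Ω : Type*} [MeasurableSpace Ω] (P : Measure Ω) [IsProbabilityMeasure P]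
    (lam μ₁ μ₂ : ℝ) (hlam : 0 < lam) (hμ₁ : 0 < μ₁) (hμ₂ : 0 < μ₂) (hlt : μ₁ < μ₂)
    (X Y : Ω → ℝ)
    (hX : IsExpRV P lam X) (hY : IsHypoexpRV P μ₁ μ₂ Y)
    (hindep : IndepFun X Y P)
    (Z : Ω → ℝ) (hZ : Z = fun ω => Y ω - X ω)
    (Λ : Set Ω) (hΛ : Λ = {ω | Y ω > X ω})
    (w : ℝ) (hw : w = μ₂ * (lam + μ₂) / ((μ₂ - μ₁) * (lam + μ₁ + μ₂))) :
    (∀ s x₀ : ℝ, 0 ≤ s → 0 ≤ x₀ →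
      (P[|Λ]) {ω | Z ω > s ∧ X ω > x₀} =
        ENNReal.ofReal (∫ z in Set.Ioi s, ∫ x in Set.Ioi x₀,
          (w * μ₁ * Real.exp (-μ₁ * z) * (lam + μ₁) * Real.exp (-(lam + μ₁) * x) +
            (1 - w) * μ₂ * Real.exp (-μ₂ * z) * (lam + μ₂) * Real.exp (-(lam + μ₂) * x))))
    ∧ ¬ IndepFun Z X (P[|Λ]) := by
  obtain ⟨hXm, hXs⟩ := hX
  have hYm := hY.1
  have hcpos : (0:ℝ) < lam + μ₁ := by linarith
  have hdpos : (0:ℝ) < lam + μ₂ := by linarith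
  have hμne : μ₂ - μ₁ ≠ 0 := by linarith
  have hspos : (0:ℝ) < lam + μ₁ + μ₂ := by linarith
  have hΛm : MeasurableSet Λ := by rw [hΛ]; exact measurableSet_lt hXm hYm
  set K : ℝ → ℝ → ℝ := fun s x₀ =>
    (lam * μ₂ * Real.exp (-μ₁ * s) / (μ₂ - μ₁)) * Real.exp (-(lam + μ₁) * x₀) / (lam + μ₁)
      + (-(lam * μ₁ * Real.exp (-μ₂ * s) / (μ₂ - μ₁))) * Real.exp (-(lam + μ₂) * x₀) / (lam + μ₂)
    with hKdef
  set R : ℝ → ℝ → ℝ := fun s x₀ =>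
    w * Real.exp (-μ₁ * s) * Real.exp (-(lam + μ₁) * x₀)
      + (1 - w) * Real.exp (-μ₂ * s) * Real.exp (-(lam + μ₂) * x₀) with hRdef
  -- the unconditional key formula
  have hkey : ∀ s x₀ : ℝ, 0 ≤ s → 0 ≤ x₀ →
      P {ω | Z ω > s ∧ X ω > x₀} = ENNReal.ofReal (K s x₀) := by
    intro s x₀ hs hx₀
    have hset : {ω | Z ω > s ∧ X ω > x₀} = {ω | Y ω - X ω > s ∧ X ω > x₀} := by
      simp only [hZ]
    rw [hset, hKdef]
    exact aux_key P lam μ₁ μ₂ hlam hμ₁ hμ₂ hlt X Y ⟨hXm, hXs⟩ hY hindep s x₀ hs hx₀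
  -- nonnegativity of K
  have hKnonneg : ∀ s x₀ : ℝ, 0 ≤ s → 0 ≤ x₀ → 0 ≤ K s x₀ := by
    intro s x₀ hs hx₀
    have hE1 : Real.exp (-μ₂ * s) ≤ Real.exp (-μ₁ * s) := by
      apply Real.exp_le_exp.2; nlinarith
    have hE2 : Real.exp (-(lam + μ₂) * x₀) ≤ Real.exp (-(lam + μ₁) * x₀) := by
      apply Real.exp_le_exp.2; nlinarith
    have ha : μ₁ * Real.exp (-μ₂ * s) ≤ μ₂ * Real.exp (-μ₁ * s) :=
      mul_le_mul hlt.le hE1 (Real.exp_pos _).le (by linarith)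
    have hb : Real.exp (-(lam + μ₂) * x₀) / (lam + μ₂)
        ≤ Real.exp (-(lam + μ₁) * x₀) / (lam + μ₁) :=
      div_le_div₀ (Real.exp_pos _).le hE2 hcpos (by linarith)
    have hab : (μ₁ * Real.exp (-μ₂ * s)) * (Real.exp (-(lam + μ₂) * x₀) / (lam + μ₂))
        ≤ (μ₂ * Real.exp (-μ₁ * s)) * (Real.exp (-(lam + μ₁) * x₀) / (lam + μ₁)) :=
      mul_le_mul ha hb (by positivity) (by positivity)
    have hmul := mul_le_mul_of_nonneg_left hab (le_of_lt (div_pos hlam (by linarith : (0:ℝ) < μ₂ - μ₁)))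
    have e1 : lam / (μ₂ - μ₁) * ((μ₁ * Real.exp (-μ₂ * s)) * (Real.exp (-(lam + μ₂) * x₀) / (lam + μ₂)))
        = lam * μ₁ * Real.exp (-μ₂ * s) / (μ₂ - μ₁) * Real.exp (-(lam + μ₂) * x₀) / (lam + μ₂) := by ring
    have e2 : lam / (μ₂ - μ₁) * ((μ₂ * Real.exp (-μ₁ * s)) * (Real.exp (-(lam + μ₁) * x₀) / (lam + μ₁)))
        = lam * μ₂ * Real.exp (-μ₁ * s) / (μ₂ - μ₁) * Real.exp (-(lam + μ₁) * x₀) / (lam + μ₁) := by ring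
    rw [e1, e2] at hmul
    have e3 : -(lam * μ₁ * Real.exp (-μ₂ * s) / (μ₂ - μ₁)) * Real.exp (-(lam + μ₂) * x₀) / (lam + μ₂)
        = -(lam * μ₁ * Real.exp (-μ₂ * s) / (μ₂ - μ₁) * Real.exp (-(lam + μ₂) * x₀) / (lam + μ₂)) := by
      ring
    simp only [hKdef]
    linarith [e3, hmul]
  -- K factors through R
  have hKR : ∀ s x₀ : ℝ, K s x₀ = K 0 0 * R s x₀ := by
    intro s x₀
    simp only [hKdef, hRdef, mul_zero, neg_zero, zero_mul, Real.exp_zero, hw]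
    field_simp
    ring
  have hK00pos : 0 < K 0 0 := by
    have : K 0 0 = lam * (lam + μ₁ + μ₂) / ((lam + μ₁) * (lam + μ₂)) := by
      simp only [hKdef, mul_zero, neg_zero, zero_mul, Real.exp_zero]
      field_simp
      ring
    rw [this]; positivity
  have hRnonneg : ∀ s x₀ : ℝ, 0 ≤ s → 0 ≤ x₀ → 0 ≤ R s x₀ := by
    intro s x₀ hs hx₀
    have h := hKnonneg s x₀ hs hx₀
    rw [hKR s x₀] at h
    nlinarith
  -- null set where X ≤ 0
  have hmeasX0 : MeasurableSet {ω | X ω > 0} := measurableSet_lt measurable_const hXm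
  have hN : P {ω | ¬ X ω > 0} = 0 := by
    have hc : {ω | ¬ X ω > 0} = {ω | X ω > 0}ᶜ := rfl
    rw [hc, prob_compl_eq_one_sub hmeasX0, hXs 0 le_rfl]
    simp
  -- P Λ
  have hsubΛ : ∀ s x₀ : ℝ, 0 ≤ s → {ω | Z ω > s ∧ X ω > x₀} ⊆ Λ := by
    intro s x₀ hs ω hω
    have h1 : Z ω > s := hω.1
    have h2 : Z ω = Y ω - X ω := by rw [hZ]
    rw [hΛ]
    simp only [Set.mem_setOf_eq]
    have : Y ω - X ω > 0 := by rw [← h2]; linarith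
    linarith
  have hPΛ : P Λ = ENNReal.ofReal (K 0 0) := by
    rw [← measure_inter_add_diff Λ hmeasX0]
    have h0 : P (Λ \ {ω | X ω > 0}) = 0 :=
      measure_mono_null (fun ω hω => hω.2) hN
    rw [h0, add_zero]
    have hseteq : Λ ∩ {ω | X ω > 0} = {ω | Z ω > 0 ∧ X ω > 0} := by
      ext ω
      simp only [hΛ, hZ, Set.mem_inter_iff, Set.mem_setOf_eq, sub_pos]
    rw [hseteq, hkey 0 0 le_rfl le_rfl]
  have hPΛne : ENNReal.ofReal (K 0 0) ≠ 0 := (ENNReal.ofReal_pos.2 hK00pos).ne'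
  -- conditional formula
  have hcond : ∀ s x₀ : ℝ, 0 ≤ s → 0 ≤ x₀ →
      (P[|Λ]) {ω | Z ω > s ∧ X ω > x₀} = ENNReal.ofReal (R s x₀) := by
    intro s x₀ hs hx₀
    rw [cond_apply hΛm, Set.inter_eq_self_of_subset_right (hsubΛ s x₀ hs),
      hkey s x₀ hs hx₀, hPΛ, hKR s x₀,
      ENNReal.ofReal_mul hK00pos.le, ← mul_assoc,
      ENNReal.inv_mul_cancel hPΛne ENNReal.ofReal_ne_top, one_mul]
  refine ⟨fun s x₀ hs hx₀ => ?_, ?_⟩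
  · -- the double integral equals R s x₀
    rw [hcond s x₀ hs hx₀]
    congr 1
    have hinner : ∀ z : ℝ, (∫ x in Set.Ioi x₀,
        (w * μ₁ * Real.exp (-μ₁ * z) * (lam + μ₁) * Real.exp (-(lam + μ₁) * x) +
          (1 - w) * μ₂ * Real.exp (-μ₂ * z) * (lam + μ₂) * Real.exp (-(lam + μ₂) * x)))
        = (w * μ₁ * Real.exp (-(lam + μ₁) * x₀)) * Real.exp (-μ₁ * z)
          + ((1 - w) * μ₂ * Real.exp (-(lam + μ₂) * x₀)) * Real.exp (-μ₂ * z) := by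
      intro z
      rw [aux_int2 hcpos hdpos]
      field_simp
    rw [integral_congr_ae (ae_of_all _ hinner), aux_int2 hμ₁ hμ₂]
    simp only [hRdef]
    field_simp
  · -- not independent
    intro hI
    have hZm : Measurable Z := by rw [hZ]; exact hYm.sub hXm
    have h11 := (indepFun_iff_measure_inter_preimage_eq_mul.mp hI)
      (Set.Ioi (1:ℝ)) (Set.Ioi (1:ℝ)) measurableSet_Ioi measurableSet_Ioi
    -- rewrite the three quantities
    have hsetZX : Z ⁻¹' Set.Ioi 1 ∩ X ⁻¹' Set.Ioi 1 = {ω | Z ω > 1 ∧ X ω > 1} := by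
      ext ω; simp [Set.mem_Ioi]
    have hX1 : (P[|Λ]) (X ⁻¹' Set.Ioi 1) = ENNReal.ofReal (R 0 1) := by
      rw [← hcond 0 1 le_rfl zero_le_one, cond_apply hΛm, cond_apply hΛm]
      congr 2
      ext ω
      simp only [hΛ, hZ, Set.mem_inter_iff, Set.mem_setOf_eq, Set.mem_preimage,
        Set.mem_Ioi, sub_pos]
      tauto
    have hZ1 : (P[|Λ]) (Z ⁻¹' Set.Ioi 1) = ENNReal.ofReal (R 1 0) := by
      rw [← hcond 1 0 zero_le_one le_rfl, cond_apply hΛm, cond_apply hΛm]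
      congr 1
      rw [← measure_inter_add_diff (Λ ∩ Z ⁻¹' Set.Ioi 1) hmeasX0]
      have h0 : P ((Λ ∩ Z ⁻¹' Set.Ioi 1) \ {ω | X ω > 0}) = 0 :=
        measure_mono_null (fun ω hω => hω.2) hN
      rw [h0, add_zero]
      congr 1
      ext ω
      simp only [hΛ, hZ, Set.mem_inter_iff, Set.mem_setOf_eq, Set.mem_preimage,
        Set.mem_Ioi, sub_pos]
      constructor
      · rintro ⟨⟨hyx, hz⟩, hx⟩
        exact ⟨hyx, hz, hx⟩
      · rintro ⟨hyx, hz, hx⟩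
        exact ⟨⟨hyx, hz⟩, hx⟩
    rw [hsetZX, hcond 1 1 zero_le_one zero_le_one, hZ1, hX1,
      ← ENNReal.ofReal_mul (hRnonneg 1 0 zero_le_one le_rfl)] at h11
    have hre : R 1 1 = R 1 0 * R 0 1 :=
      (ENNReal.ofReal_eq_ofReal_iff (hRnonneg 1 1 zero_le_one zero_le_one)
        (mul_nonneg (hRnonneg 1 0 zero_le_one le_rfl) (hRnonneg 0 1 le_rfl zero_le_one))).mp h11
    -- derive contradiction
    have hwpos : 0 < w := by
      rw [hw]
      apply div_pos (by positivity)
      apply mul_pos (by linarith) hspos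
    have hw1 : 1 - w < 0 := by
      have : 1 - w = -(μ₁ * (lam + μ₁) / ((μ₂ - μ₁) * (lam + μ₁ + μ₂))) := by
        rw [hw]; field_simp; ring
      rw [this]
      have : 0 < μ₁ * (lam + μ₁) / ((μ₂ - μ₁) * (lam + μ₁ + μ₂)) := by
        apply div_pos (by positivity)
        apply mul_pos (by linarith) hspos
      linarith
    have hD1 : 0 < Real.exp (-μ₁ * 1) - Real.exp (-μ₂ * 1) := by
      have : Real.exp (-μ₂ * 1) < Real.exp (-μ₁ * 1) := Real.exp_lt_exp.2 (by linarith)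
      linarith
    have hD2 : 0 < Real.exp (-(lam + μ₁) * 1) - Real.exp (-(lam + μ₂) * 1) := by
      have : Real.exp (-(lam + μ₂) * 1) < Real.exp (-(lam + μ₁) * 1) := Real.exp_lt_exp.2 (by linarith)
      linarith
    have hfact : R 1 1 - R 1 0 * R 0 1
        = w * (1 - w) * (Real.exp (-μ₁ * 1) - Real.exp (-μ₂ * 1))
          * (Real.exp (-(lam + μ₁) * 1) - Real.exp (-(lam + μ₂) * 1)) := by
      simp only [hRdef, mul_zero, neg_zero, zero_mul, Real.exp_zero]
      ring
    have hzero : R 1 1 - R 1 0 * R 0 1 = 0 := by rw [hre]; ring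
    rw [hzero] at hfact
    have hneg : w * (1 - w) * (Real.exp (-μ₁ * 1) - Real.exp (-μ₂ * 1))
        * (Real.exp (-(lam + μ₁) * 1) - Real.exp (-(lam + μ₂) * 1)) < 0 := by
      apply mul_neg_of_neg_of_pos _ hD2
      apply mul_neg_of_neg_of_pos _ hD1
      exact mul_neg_of_pos_of_neg hwpos hw1
    rw [← hfact] at hneg
    exact lt_irrefl _ hneg

end Aux

/-- Let `X ~ Exp(λ)` and `Y ~ Hypoexp(μ₁, μ₂)` be independent with `μ₁ ≠ μ₂`,
`Z = Y - X`, `Λ = {Y > X}`, and `w = μ₂(λ+μ₂)/((μ₂-μ₁)(λ+μ₁+μ₂))`. Then the conditional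
joint density of `(Z, X)` given `Λ` is
`f(z,x) = w μ₁ e^{-μ₁ z} (λ+μ₁) e^{-(λ+μ₁)x} + (1-w) μ₂ e^{-μ₂ z} (λ+μ₂) e^{-(λ+μ₂)x}`
for `z, x > 0`; and `Z` and `X` are not conditionally independent given `Λ`. -/
theorem cond_joint_density_and_dependence
    {Ω : Type*} [MeasurableSpace Ω] (P : Measure Ω) [IsProbabilityMeasure P]
    (lam μ₁ μ₂ : ℝ) (hlam : 0 < lam) (hμ₁ : 0 < μ₁) (hμ₂ : 0 < μ₂) (hne : μ₁ ≠ μ₂)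
    (X Y : Ω → ℝ)
    (hX : IsExpRV P lam X) (hY : IsHypoexpRV P μ₁ μ₂ Y)
    (hindep : IndepFun X Y P)
    (Z : Ω → ℝ) (hZ : Z = fun ω => Y ω - X ω)
    (Λ : Set Ω) (hΛ : Λ = {ω | Y ω > X ω})
    (w : ℝ) (hw : w = μ₂ * (lam + μ₂) / ((μ₂ - μ₁) * (lam + μ₁ + μ₂))) :
    (∀ s x₀ : ℝ, 0 ≤ s → 0 ≤ x₀ →
      (P[|Λ]) {ω | Z ω > s ∧ X ω > x₀} =
        ENNReal.ofReal (∫ z in Set.Ioi s, ∫ x in Set.Ioi x₀,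
          (w * μ₁ * Real.exp (-μ₁ * z) * (lam + μ₁) * Real.exp (-(lam + μ₁) * x) +
            (1 - w) * μ₂ * Real.exp (-μ₂ * z) * (lam + μ₂) * Real.exp (-(lam + μ₂) * x))))
    ∧ ¬ IndepFun Z X (P[|Λ]) := by
  rcases lt_or_gt_of_ne hne with hlt | hlt
  · exact main_case P lam μ₁ μ₂ hlam hμ₁ hμ₂ hlt X Y hX hY hindep Z hZ Λ hΛ w hw
  · have h12 : μ₁ - μ₂ ≠ 0 := sub_ne_zero.2 hne
    have h21 : μ₂ - μ₁ ≠ 0 := sub_ne_zero.2 hne.symm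
    have hsne : lam + μ₁ + μ₂ ≠ 0 := by positivity
    have hsne' : lam + μ₂ + μ₁ ≠ 0 := by positivity
    have hY' : IsHypoexpRV P μ₂ μ₁ Y := by
      refine ⟨hY.1, fun t ht => ?_⟩
      rw [hY.2 t ht]
      congr 1
      field_simp
      ring
    have hw' : (1 - w) = μ₁ * (lam + μ₁) / ((μ₁ - μ₂) * (lam + μ₂ + μ₁)) := by
      rw [hw]
      field_simp
      ring
    obtain ⟨h1, h2⟩ := main_case P lam μ₂ μ₁ hlam hμ₂ hμ₁ hlt X Y hX hY' hindep
      Z hZ Λ hΛ (1 - w) hw'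
    refine ⟨fun s x₀ hs hx₀ => ?_, h2⟩
    rw [h1 s x₀ hs hx₀]
    congr 1
    refine integral_congr_ae (Filter.Eventually.of_forall (fun z => ?_))
    refine integral_congr_ae (Filter.Eventually.of_forall (fun x => ?_))
    ring
end

section
/- Let X be hypoexponential with parameters (λ, γ) (sum of independent Exp(λ) and Exp(γ)), let S ~ Exp(μ), and let σ ∈ (0,1) satisfy σ = (λ/(λ+μ−μσ))(γ/(γ+μ−μσ)). Define Y to equal S with probability σ and S + X^R with probability 1−σ, where X^R has density f(t) = wλe^{−λt} + (1−w)γe^{−γt} with w = γ(γ+μ−μσ)/((γ−λ)(λ+γ+μ−μσ)), all components independent. Then E[Y] = 1/λ + 1/γ and E[Y²] = 2(1/γ² + 1/λ² + (1+σ)/(λγ)). -/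
open MeasureTheory ProbabilityTheory Real

open Filter Set

lemma exp_neg_mul_tendsto {a : ℝ} (ha : 0 < a) :
    Tendsto (fun s : ℝ => Real.exp (-a * s)) atTop (nhds 0) := by
  have h1 : Tendsto (fun s : ℝ => -a * s) atTop atBot :=
    tendsto_id.const_mul_atTop_of_neg (by linarith)
  exact Real.tendsto_exp_atBot.comp h1

lemma my_integral_exp_neg_mul_Ioi {a : ℝ} (ha : 0 < a) (t : ℝ) :
    ∫ s in Set.Ioi t, Real.exp (-a * s) = Real.exp (-a * t) / a := by
  have hderiv : ∀ x ∈ Set.Ioi t, HasDerivAt (fun s => -Real.exp (-a * s) / a)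
      (Real.exp (-a * x)) x := by
    intro x _
    have h1 : HasDerivAt (fun s : ℝ => -a * s) (-a) x := by
      simpa using (hasDerivAt_id x).const_mul (-a)
    have h3 := (h1.exp.div_const a).neg
    have he2 : (fun s => -Real.exp (-a * s) / a) = -fun s => Real.exp (-a * s) / a := by
      funext s; simp only [Pi.neg_apply]; ring
    rw [he2]
    refine h3.congr_deriv ?_
    have he : -(Real.exp (-a * x) * -a / a) = Real.exp (-a*x) * (a/a) := by ring
    rw [he, div_self ha.ne', mul_one]
  have hcont : ContinuousWithinAt (fun s => -Real.exp (-a * s) / a) (Set.Ici t) t := by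
    apply Continuous.continuousWithinAt
    continuity
  have hint : IntegrableOn (fun s => Real.exp (-a * s)) (Set.Ioi t) :=
    exp_neg_integrableOn_Ioi t ha
  have htend : Tendsto (fun s => -Real.exp (-a * s) / a) atTop (nhds 0) := by
    simpa using ((exp_neg_mul_tendsto ha).neg).div_const a
  have := MeasureTheory.integral_Ioi_of_hasDerivAt_of_tendsto hcont hderiv hint htend
  rw [this]; ring

lemma my_integrableOn_id_mul_exp {a : ℝ} (ha : 0 < a) :
    IntegrableOn (fun s : ℝ => s * Real.exp (-a * s)) (Set.Ioi 0) := by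
  apply integrable_of_isBigO_exp_neg (half_pos ha) (by continuity : Continuous fun s : ℝ => s * Real.exp (-a * s)).continuousOn
  have hb : Tendsto (fun s : ℝ => s * Real.exp (-(a/2) * s)) atTop (nhds 0) := by
    have := Real.tendsto_pow_mul_exp_neg_atTop_nhds_zero 1
    have h2 := this.comp (tendsto_id.const_mul_atTop (half_pos ha))
    have h3 := h2.const_mul (2/a)
    simp only [mul_zero] at h3
    convert h3 using 2 with s
    simp only [Function.comp]
    field_simp
    ring_nf
    simp only [id_eq]
    ring_nf
  have hO : (fun s : ℝ => s * Real.exp (-(a/2)*s)) =O[atTop] (fun _ : ℝ => (1:ℝ)) :=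
    hb.isBigO_one ℝ
  calc (fun s : ℝ => s * Real.exp (-a * s))
      = fun s : ℝ => (s * Real.exp (-(a/2)*s)) * Real.exp (-(a/2)*s) := by
        funext s; rw [mul_assoc, ← Real.exp_add]; ring_nf
    _ =O[atTop] fun s : ℝ => 1 * Real.exp (-(a/2)*s) :=
        hO.mul (Asymptotics.isBigO_refl _ _)
    _ = fun s : ℝ => Real.exp (-(a/2)*s) := by funext s; rw [one_mul]

lemma my_integral_id_mul_exp {a : ℝ} (ha : 0 < a) :
    ∫ s in Set.Ioi (0:ℝ), s * Real.exp (-a * s) = 1 / a ^ 2 := by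
  have hderiv : ∀ x ∈ Set.Ioi (0:ℝ), HasDerivAt (fun s => -((s/a + 1/a^2) * Real.exp (-a * s)))
      (x * Real.exp (-a * x)) x := by
    intro x _
    have h1 : HasDerivAt (fun s : ℝ => -a * s) (-a) x := by
      simpa using (hasDerivAt_id x).const_mul (-a)
    have h2 : HasDerivAt (fun s : ℝ => s/a + 1/a^2) (1/a) x := by
      exact ((hasDerivAt_id x).div_const a).add_const (1/a^2)
    have h3 := (h2.mul h1.exp).neg
    refine h3.congr_deriv ?_
    field_simp [ha.ne']
    ring
  have hcont : ContinuousWithinAt (fun s : ℝ => -((s/a + 1/a^2) * Real.exp (-a * s))) (Set.Ici 0) 0 := by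
    apply Continuous.continuousWithinAt; continuity
  have htend : Tendsto (fun s : ℝ => -((s/a + 1/a^2) * Real.exp (-a * s))) atTop (nhds 0) := by
    have h1 : Tendsto (fun s : ℝ => s * Real.exp (-a * s)) atTop (nhds 0) := by
      have := Real.tendsto_pow_mul_exp_neg_atTop_nhds_zero 1
      have h2 := this.comp (tendsto_id.const_mul_atTop ha)
      have h3 := h2.const_mul (1/a)
      simp only [mul_zero] at h3
      convert h3 using 2 with s
      simp only [Function.comp]
      field_simp
      ring_nf
      simp only [id_eq]
      ring_nf
    have h2 := (h1.const_mul (1/a)).add ((exp_neg_mul_tendsto ha).const_mul (1/a^2))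
    simp only [mul_zero, add_zero] at h2
    have h3 := h2.neg
    simp only [neg_zero] at h3
    convert h3 using 2 with s
    ring
  have := MeasureTheory.integral_Ioi_of_hasDerivAt_of_tendsto hcont hderiv
    (my_integrableOn_id_mul_exp ha) htend
  rw [this]
  simp [Real.exp_zero]

lemma tail_moments {Ω : Type*} [MeasurableSpace Ω] (P : Measure Ω) [IsProbabilityMeasure P]
    (f : Ω → ℝ) (hf : Measurable f) (a b c₁ c₂ : ℝ) (ha : 0 < a) (hb : 0 < b)
    (hone : c₁ + c₂ = 1)
    (hnn : ∀ t : ℝ, 0 ≤ t → 0 ≤ c₁ * Real.exp (-a * t) + c₂ * Real.exp (-b * t))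
    (htail : ∀ t : ℝ, 0 ≤ t →
      P {ω | f ω > t} = ENNReal.ofReal (c₁ * Real.exp (-a * t) + c₂ * Real.exp (-b * t))) :
    (0 ≤ᵐ[P] f) ∧ Integrable f P ∧ Integrable (fun ω => f ω ^ 2) P ∧
      (∫ ω, f ω ∂P) = c₁ / a + c₂ / b ∧
      (∫ ω, f ω ^ 2 ∂P) = 2 * (c₁ / a ^ 2) + 2 * (c₂ / b ^ 2) := by
  set T : ℝ → ℝ := fun t => c₁ * Real.exp (-a * t) + c₂ * Real.exp (-b * t) with hT
  -- f nonneg a.e.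
  have hfnn : 0 ≤ᵐ[P] f := by
    have h0 : P {ω | f ω > 0} = 1 := by
      rw [htail 0 le_rfl]; simp [hone]
    have hms : MeasurableSet {ω | f ω > 0} := measurableSet_lt measurable_const hf
    have hc : P {ω | f ω > 0}ᶜ = 0 := by
      rw [measure_compl hms (measure_ne_top P _), h0, measure_univ, tsub_self]
    have hae : ∀ᵐ ω ∂P, f ω > 0 := by
      rw [ae_iff]
      simpa [Set.compl_setOf] using hc
    exact hae.mono fun ω h => le_of_lt h
  -- tail function facts
  have hTint : IntegrableOn T (Set.Ioi 0) := by
    exact (((exp_neg_integrableOn_Ioi 0 ha).const_mul c₁).add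
      ((exp_neg_integrableOn_Ioi 0 hb).const_mul c₂))
  have hTval : ∫ t in Set.Ioi (0:ℝ), T t = c₁ / a + c₂ / b := by
    rw [hT]
    rw [integral_add ((exp_neg_integrableOn_Ioi 0 ha).const_mul c₁)
      ((exp_neg_integrableOn_Ioi 0 hb).const_mul c₂), integral_const_mul, integral_const_mul,
      my_integral_exp_neg_mul_Ioi ha 0, my_integral_exp_neg_mul_Ioi hb 0]
    simp only [mul_zero, neg_zero, Real.exp_zero]
    ring
  have hTnn : 0 ≤ᵐ[volume.restrict (Set.Ioi 0)] T :=
    (ae_restrict_iff' measurableSet_Ioi).mpr (ae_of_all _ fun t ht => hnn t (le_of_lt ht))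
  -- first moment lintegral
  have hL1 : ∫⁻ ω, ENNReal.ofReal (f ω) ∂P = ENNReal.ofReal (c₁ / a + c₂ / b) := by
    rw [lintegral_eq_lintegral_meas_lt P hfnn hf.aemeasurable]
    have : ∫⁻ t in Set.Ioi (0:ℝ), P {ω | t < f ω} = ∫⁻ t in Set.Ioi (0:ℝ), ENNReal.ofReal (T t) := by
      apply setLIntegral_congr_fun measurableSet_Ioi
      exact fun t ht => htail t (le_of_lt ht)
    rw [this, ← ofReal_integral_eq_lintegral_ofReal hTint hTnn, hTval]
  have hint1 : Integrable f P := by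
    refine ⟨hf.aestronglyMeasurable, ?_⟩
    rw [hasFiniteIntegral_iff_ofReal hfnn, hL1]
    exact ENNReal.ofReal_lt_top
  have hm1 : (∫ ω, f ω ∂P) = c₁ / a + c₂ / b := by
    rw [integral_eq_lintegral_of_nonneg_ae hfnn hf.aestronglyMeasurable, hL1,
      ENNReal.toReal_ofReal]
    rw [← hTval]
    exact setIntegral_nonneg measurableSet_Ioi fun t ht => hnn t (le_of_lt ht)
  -- second moment
  have hf2nn : 0 ≤ᵐ[P] fun ω => f ω ^ 2 := ae_of_all _ fun ω => sq_nonneg _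
  have hT2int : IntegrableOn (fun t => T t * (2 * t)) (Set.Ioi 0) := by
    have h1 : IntegrableOn (fun t : ℝ => (2*c₁) * (t * Real.exp (-a * t)) +
        (2*c₂) * (t * Real.exp (-b * t))) (Set.Ioi 0) :=
      ((my_integrableOn_id_mul_exp ha).const_mul (2*c₁)).add
        ((my_integrableOn_id_mul_exp hb).const_mul (2*c₂))
    exact h1.congr_fun (fun t _ => by simp only [hT]; ring) measurableSet_Ioi
  have hT2val : ∫ t in Set.Ioi (0:ℝ), T t * (2 * t) = 2 * (c₁ / a ^ 2) + 2 * (c₂ / b ^ 2) := by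
    have h1 : ∀ t : ℝ, T t * (2 * t) = (2*c₁) * (t * Real.exp (-a * t)) +
        (2*c₂) * (t * Real.exp (-b * t)) := fun t => by simp only [hT]; ring
    rw [setIntegral_congr_fun measurableSet_Ioi fun t _ => h1 t]
    rw [integral_add ((my_integrableOn_id_mul_exp ha).const_mul (2*c₁))
      ((my_integrableOn_id_mul_exp hb).const_mul (2*c₂)), integral_const_mul, integral_const_mul,
      my_integral_id_mul_exp ha, my_integral_id_mul_exp hb]
    ring
  have hT2nn : 0 ≤ᵐ[volume.restrict (Set.Ioi 0)] fun t => T t * (2 * t) :=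
    (ae_restrict_iff' measurableSet_Ioi).mpr (ae_of_all _ fun t ht =>
      mul_nonneg (hnn t (le_of_lt ht)) (mul_nonneg (by norm_num) (Set.mem_Ioi.mp ht).le))
  have hL2 : ∫⁻ ω, ENNReal.ofReal (f ω ^ 2) ∂P
      = ENNReal.ofReal (2 * (c₁ / a ^ 2) + 2 * (c₂ / b ^ 2)) := by
    have hgint : ∀ t : ℝ, t > 0 → IntervalIntegrable (fun t : ℝ => 2 * t) volume 0 t :=
      fun t _ => (continuous_const.mul continuous_id).intervalIntegrable 0 t
    have hgnn : ∀ᵐ t ∂(volume.restrict (Set.Ioi (0:ℝ))), 0 ≤ 2 * t :=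
      (ae_restrict_iff' measurableSet_Ioi).mpr (ae_of_all _ fun t ht => mul_nonneg (by norm_num) (Set.mem_Ioi.mp ht).le)
    have key := lintegral_comp_eq_lintegral_meas_lt_mul P hfnn hf.aemeasurable hgint hgnn
    have hsq : ∀ ω, (∫ t in (0:ℝ)..(f ω), 2 * t) = f ω ^ 2 := by
      intro ω
      rw [intervalIntegral.integral_const_mul, integral_id]
      ring
    have hlhs : ∫⁻ ω, ENNReal.ofReal (f ω ^ 2) ∂P
        = ∫⁻ ω, ENNReal.ofReal (∫ t in (0:ℝ)..(f ω), 2 * t) ∂P := by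
      apply lintegral_congr fun ω => by rw [hsq ω]
    rw [hlhs, key]
    have : ∫⁻ t in Set.Ioi (0:ℝ), P {ω | t < f ω} * ENNReal.ofReal (2 * t)
        = ∫⁻ t in Set.Ioi (0:ℝ), ENNReal.ofReal (T t * (2 * t)) := by
      apply setLIntegral_congr_fun measurableSet_Ioi
      refine fun t ht => ?_
      beta_reduce
      rw [htail t (le_of_lt ht), ← ENNReal.ofReal_mul (hnn t (le_of_lt ht))]
    rw [this, ← ofReal_integral_eq_lintegral_ofReal hT2int hT2nn, hT2val]
  have hint2 : Integrable (fun ω => f ω ^ 2) P := by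
    refine ⟨(hf.pow_const 2).aestronglyMeasurable, ?_⟩
    rw [hasFiniteIntegral_iff_ofReal hf2nn, hL2]
    exact ENNReal.ofReal_lt_top
  have hm2 : (∫ ω, f ω ^ 2 ∂P) = 2 * (c₁ / a ^ 2) + 2 * (c₂ / b ^ 2) := by
    rw [integral_eq_lintegral_of_nonneg_ae hf2nn (hf.pow_const 2).aestronglyMeasurable, hL2,
      ENNReal.toReal_ofReal]
    rw [← hT2val]
    exact setIntegral_nonneg measurableSet_Ioi fun t ht =>
      mul_nonneg (hnn t (le_of_lt ht)) (mul_nonneg (by norm_num) (Set.mem_Ioi.mp ht).le)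
  exact ⟨hfnn, hint1, hint2, hm1, hm2⟩

set_option maxHeartbeats 1000000 in
/-- First two moments of the inter-departure time of the HE/M/1/∞ queue: with
`σ ∈ (0,1)` the root of `σ = (λ/(λ+μ-μσ))(γ/(γ+μ-μσ))` and
`w = γ(γ+μ-μσ)/((γ-λ)(λ+γ+μ-μσ))`, if `Y` equals `S ~ Exp(μ)` with probability `σ` and
`S + X^R` with probability `1-σ`, where `X^R` has density
`f(t) = wλe^{-λt} + (1-w)γe^{-γt}` and all components are independent, then
`E[Y] = 1/λ + 1/γ` and `E[Y²] = 2(1/γ² + 1/λ² + (1+σ)/(λγ))`. -/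
theorem hem1_interdeparture_moments
    {Ω : Type*} [MeasurableSpace Ω] (P : Measure Ω) [IsProbabilityMeasure P]
    (lam γ μ : ℝ) (hlam : 0 < lam) (hγ : 0 < γ) (hμ : 0 < μ) (hne : lam ≠ γ)
    (hstab : lam * γ < μ * (lam + γ))
    (σ : ℝ) (hσ0 : 0 < σ) (hσ1 : σ < 1)
    (hσfix : σ = lam / (lam + μ - μ * σ) * (γ / (γ + μ - μ * σ)))
    (w : ℝ) (hw : w = γ * (γ + μ - μ * σ) / ((γ - lam) * (lam + γ + μ - μ * σ)))
    (S XR : Ω → ℝ) (Λ : Set Ω) (hΛmeas : MeasurableSet Λ)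
    (hS : IsExpRV P μ S)
    (hXRmeas : Measurable XR)
    (hXR : ∀ t : ℝ, 0 ≤ t →
      P {ω | XR ω > t} =
        ENNReal.ofReal (∫ s in Set.Ioi t,
          (w * lam * Real.exp (-lam * s) + (1 - w) * γ * Real.exp (-γ * s))))
    (hΛprob : P Λ = ENNReal.ofReal σ)
    (hindep : iIndepFun (m := fun _ : Fin 3 => (inferInstance : MeasurableSpace ℝ))
      ![S, XR, Set.indicator Λ 1] P)
    (Y : Ω → ℝ) (hY : Y = fun ω => S ω + Set.indicator Λᶜ XR ω) :
    (∫ ω, Y ω ∂P) = 1 / lam + 1 / γ ∧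
      (∫ ω, Y ω ^ 2 ∂P) = 2 * (1 / γ ^ 2 + 1 / lam ^ 2 + (1 + σ) / (lam * γ)) := by
  -- positivity facts
  have hμσ : 0 < μ - μ * σ := by nlinarith
  have hA : 0 < lam + μ - μ * σ := by linarith
  have hB : 0 < γ + μ - μ * σ := by linarith
  have hC : 0 < lam + γ + μ - μ * σ := by linarith
  -- the quadratic relation
  have hrel : σ * ((lam + μ - μ * σ) * (γ + μ - μ * σ)) = lam * γ := by
    rw [div_mul_div_comm, eq_div_iff (mul_pos hA hB).ne'] at hσfix
    linarith [hσfix]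
  have hQ : μ ^ 2 * σ ^ 2 - μ ^ 2 * σ - (lam + γ) * μ * σ + lam * γ = 0 := by
    have h2 : (σ - 1) * (μ ^ 2 * σ ^ 2 - μ ^ 2 * σ - (lam + γ) * μ * σ + lam * γ) = (σ - 1) * 0 := by
      linear_combination hrel
    exact mul_left_cancel₀ (sub_ne_zero.mpr hσ1.ne) h2
  -- sign of w and nonnegativity of the XR tail
  have hw1 : w * (γ - lam) * (lam + γ + μ - μ * σ) = γ * (γ + μ - μ * σ) := by
    rw [hw]
    have h1 : (γ - lam) ≠ 0 := sub_ne_zero.mpr (Ne.symm hne)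
    field_simp
  have htailnn : ∀ t : ℝ, 0 ≤ t → 0 ≤ w * Real.exp (-lam * t) + (1 - w) * Real.exp (-γ * t) := by
    intro t ht
    rcases lt_or_gt_of_ne hne with hlg | hgl
    · -- lam < γ : w ≥ 0, exp (-γ t) ≤ exp (-lam t)
      have hwpos : 0 ≤ w := by
        rw [hw]
        apply div_nonneg (by nlinarith)
        nlinarith
      have hexp : Real.exp (-γ * t) ≤ Real.exp (-lam * t) :=
        Real.exp_le_exp.mpr (by nlinarith)
      nlinarith [Real.exp_pos (-γ * t), Real.exp_pos (-lam * t)]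
    · -- γ < lam : w ≤ 0
      have hwneg : w ≤ 0 := by
        rw [hw]
        apply div_nonpos_of_nonneg_of_nonpos
        · positivity
        · apply mul_nonpos_of_nonpos_of_nonneg <;> nlinarith
      have hexp : Real.exp (-lam * t) ≤ Real.exp (-γ * t) :=
        Real.exp_le_exp.mpr (by nlinarith)
      nlinarith [Real.exp_pos (-γ * t), Real.exp_pos (-lam * t)]
  -- XR tail in closed form
  have hXRtail : ∀ t : ℝ, 0 ≤ t →
      P {ω | XR ω > t} = ENNReal.ofReal (w * Real.exp (-lam * t) + (1 - w) * Real.exp (-γ * t)) := by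
    intro t ht
    rw [hXR t ht]
    congr 1
    have h1 : IntegrableOn (fun s => Real.exp (-lam * s)) (Set.Ioi t) :=
      exp_neg_integrableOn_Ioi t hlam
    have h2 : IntegrableOn (fun s => Real.exp (-γ * s)) (Set.Ioi t) :=
      exp_neg_integrableOn_Ioi t hγ
    have : ∫ s in Set.Ioi t, (w * lam * Real.exp (-lam * s) + (1 - w) * γ * Real.exp (-γ * s))
        = (w * lam) * (Real.exp (-lam * t) / lam) + ((1 - w) * γ) * (Real.exp (-γ * t) / γ) := by
      rw [integral_add (h1.const_mul _) (h2.const_mul _), integral_const_mul, integral_const_mul,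
        my_integral_exp_neg_mul_Ioi hlam t, my_integral_exp_neg_mul_Ioi hγ t]
    rw [this]
    field_simp
  -- moments of S and XR
  obtain ⟨hSnn, hSint, hS2int, hSm1, hSm2⟩ :=
    tail_moments P S hS.1 μ μ 1 0 hμ hμ (by norm_num)
      (fun t ht => by positivity)
      (fun t ht => by simpa using hS.2 t ht)
  obtain ⟨hXnn, hXint, hX2int, hXm1, hXm2⟩ :=
    tail_moments P XR hXRmeas lam γ w (1 - w) hlam hγ (by ring)
      htailnn hXRtail
  -- the indicator variable
  set g : Ω → ℝ := Set.indicator Λ 1 with hg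
  have hgmeas : Measurable g := measurable_one.indicator hΛmeas
  have hgint : Integrable g P := (integrable_const (1:ℝ)).indicator hΛmeas
  have hg01 : ∀ ω, g ω = 0 ∨ g ω = 1 := by
    intro ω
    by_cases hω : ω ∈ Λ <;> simp [hg, Set.indicator, hω]
  have hgval : (∫ ω, g ω ∂P) = σ := by
    rw [hg, integral_indicator_one hΛmeas, measureReal_def, hΛprob, ENNReal.toReal_ofReal hσ0.le]
  have hhint : Integrable (fun ω => 1 - g ω) P := (integrable_const (1:ℝ)).sub hgint
  have hhval : (∫ ω, (1 - g ω) ∂P) = 1 - σ := by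
    rw [integral_sub (integrable_const _) hgint, integral_const, hgval]
    simp
  -- measurability of the triple
  have hm : ∀ i, Measurable (![S, XR, g] i) := by
    intro i
    fin_cases i
    · exact hS.1
    · exact hXRmeas
    · exact hgmeas
  -- independence facts
  have hXg : IndepFun XR g P := by
    have := hindep.indepFun (show (1 : Fin 3) ≠ 2 by decide)
    simpa using this
  have hpair : IndepFun (fun ω => (XR ω, g ω)) S P := by
    have := hindep.indepFun_prodMk hm 1 2 0 (by decide) (by decide)
    simpa using this
  have hψ : Measurable (fun x : ℝ => 1 - x) := measurable_const.sub measurable_id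
  have i1 : IndepFun XR (fun ω => 1 - g ω) P := hXg.comp measurable_id hψ
  have i2 : IndepFun (fun ω => XR ω ^ 2) (fun ω => 1 - g ω) P :=
    hXg.comp (measurable_id.pow_const 2) hψ
  have hφ : Measurable (fun p : ℝ × ℝ => p.1 * (1 - p.2)) :=
    measurable_fst.mul (measurable_const.sub measurable_snd)
  have i3 : IndepFun (fun ω => XR ω * (1 - g ω)) S P := hpair.comp hφ measurable_id
  -- Z and its moments
  set Z : Ω → ℝ := fun ω => XR ω * (1 - g ω) with hZ
  have hZeq : ∀ ω, Set.indicator Λᶜ XR ω = Z ω := by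
    intro ω
    by_cases hω : ω ∈ Λ <;> simp [hZ, hg, Set.indicator, hω]
  have hZint : Integrable Z P := i1.integrable_mul hXint hhint
  have hZval : (∫ ω, Z ω ∂P) = (w / lam + (1 - w) / γ) * (1 - σ) := by
    have h : (∫ ω, Z ω ∂P) = (∫ ω, XR ω ∂P) * (∫ ω, (1 - g ω) ∂P) :=
      i1.integral_fun_mul_eq_mul_integral hXint.1 hhint.1
    rw [h, hXm1, hhval]
  have hZ2eq : ∀ ω, Z ω ^ 2 = XR ω ^ 2 * (1 - g ω) := by
    intro ω
    rcases hg01 ω with h | h <;> rw [hZ] <;> simp [h]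
  have hZ2int : Integrable (fun ω => Z ω ^ 2) P := by
    have h := i2.integrable_mul hX2int hhint
    exact h.congr (ae_of_all _ fun ω => (hZ2eq ω).symm)
  have hZ2val : (∫ ω, Z ω ^ 2 ∂P) = (2 * (w / lam ^ 2) + 2 * ((1 - w) / γ ^ 2)) * (1 - σ) := by
    rw [integral_congr_ae (ae_of_all _ fun ω => hZ2eq ω)]
    have h : (∫ ω, XR ω ^ 2 * (1 - g ω) ∂P) = (∫ ω, XR ω ^ 2 ∂P) * (∫ ω, (1 - g ω) ∂P) :=
      i2.integral_fun_mul_eq_mul_integral hX2int.1 hhint.1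
    rw [h, hXm2, hhval]
  have hSZint : Integrable (fun ω => S ω * Z ω) P := i3.symm.integrable_mul hSint hZint
  have hSZval : (∫ ω, S ω * Z ω ∂P) = (1 / μ) * ((w / lam + (1 - w) / γ) * (1 - σ)) := by
    have h : (∫ ω, S ω * Z ω ∂P) = (∫ ω, S ω ∂P) * (∫ ω, Z ω ∂P) :=
      i3.symm.integral_fun_mul_eq_mul_integral hSint.1 hZint.1
    rw [h, hZval, hSm1]
    ring
  -- first moment of Y
  have hYeq : Y = fun ω => S ω + Z ω := by
    rw [hY]; funext ω; rw [hZeq ω]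
  have hEy : (∫ ω, Y ω ∂P) = 1 / μ + (w / lam + (1 - w) / γ) * (1 - σ) := by
    rw [hYeq, integral_add hSint hZint, hSm1, hZval]
    ring
  have hEy2 : (∫ ω, Y ω ^ 2 ∂P) = 2 * (1 / μ ^ 2)
      + (2 * ((1 / μ) * ((w / lam + (1 - w) / γ) * (1 - σ)))
        + (2 * (w / lam ^ 2) + 2 * ((1 - w) / γ ^ 2)) * (1 - σ)) := by
    rw [hYeq]
    have hexp : (fun ω => (S ω + Z ω) ^ 2)
        = fun ω => S ω ^ 2 + (2 * (S ω * Z ω) + Z ω ^ 2) := by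
      funext ω; ring
    have hint23 : Integrable (fun ω => 2 * (S ω * Z ω) + Z ω ^ 2) P :=
      (hSZint.const_mul 2).add hZ2int
    have h1 : ∫ ω, (S ω ^ 2 + (2 * (S ω * Z ω) + Z ω ^ 2)) ∂P
        = (∫ ω, S ω ^ 2 ∂P) + ∫ ω, (2 * (S ω * Z ω) + Z ω ^ 2) ∂P :=
      integral_add hS2int hint23
    have h2 : ∫ ω, (2 * (S ω * Z ω) + Z ω ^ 2) ∂P
        = 2 * (∫ ω, S ω * Z ω ∂P) + ∫ ω, Z ω ^ 2 ∂P := by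
      rw [integral_add (hSZint.const_mul 2) hZ2int, integral_const_mul]
    rw [hexp, h1, h2, hSm2, hSZval, hZ2val]
    ring
  have hgl : γ - lam ≠ 0 := sub_ne_zero.mpr (Ne.symm hne)
  constructor
  · rw [hEy, hw]
    field_simp [hgl, hC.ne']
    linear_combination (γ^2 - lam^2) * hQ
  · rw [hEy2, hw]
    field_simp [hgl, hC.ne']
    linear_combination (μ*γ^3 + μ*lam*γ^2 - μ*lam^2*γ - μ*lam^3 + lam*γ^3 - lam^3*γ) * hQ
end

section
/- In the M/M/1/∞ → M/M/1/∞ tandem with arrival rate λ and service rates γ (first) and μ (second), with λ < γ and λ < μ, the expected product of the second queue's inter-departure time Y with the previous packet's system time T in the first queue is E[Y·T] = 1/(γλ) + (λ/γ²)/(γ−λ) + (λ/(γμ))/(γ+μ−λ). In particular Cov(Y, T) = (1/γ²)·((γ+μ)(λ−μ))/(μ(γ+μ−λ)) < 0. -/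
open MeasureTheory ProbabilityTheory Real

open Set Filter

noncomputable section

def eM (r : ℝ) : Measure ℝ :=
  (volume.restrict (Ioi 0)).withDensity (fun x => ENNReal.ofReal (r * exp (-(r * x))))

lemma tendsto_exp_neg_mul {r : ℝ} (hr : 0 < r) :
    Tendsto (fun x : ℝ => exp (-(r * x))) atTop (nhds 0) := by
  have h : Tendsto (fun x : ℝ => -(r * x)) atTop atBot := by
    simpa [neg_mul] using (tendsto_id (α := ℝ)).const_mul_atTop_of_neg (neg_neg_iff_pos.2 hr)
  exact Real.tendsto_exp_atBot.comp h

lemma tendsto_lin_exp_neg_mul {r : ℝ} (hr : 0 < r) (a b : ℝ) :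
    Tendsto (fun x : ℝ => (a * x + b) * exp (-(r * x))) atTop (nhds 0) := by
  have h1 : Tendsto (fun x : ℝ => a * (x * exp (-(r * x)))) atTop (nhds (a * 0)) := by
    apply Tendsto.const_mul
    have h0 : Tendsto (fun y : ℝ => y * exp (-y)) atTop (nhds 0) := by
      simpa using Real.tendsto_pow_mul_exp_neg_atTop_nhds_zero 1
    have hl : Tendsto (fun x : ℝ => r * x) atTop atTop :=
      Tendsto.const_mul_atTop hr tendsto_id
    have h2 := (h0.comp hl).const_mul (1/r)
    simp only [mul_zero] at h2
    convert h2 using 2 with x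
    simp only [Function.comp]
    field_simp
  have h2 : Tendsto (fun x : ℝ => b * exp (-(r * x))) atTop (nhds (b * 0)) :=
    (tendsto_exp_neg_mul hr).const_mul b
  have := h1.add h2
  simp only [mul_zero, add_zero] at this
  convert this using 2 with x
  ring

lemma hasDerivAt_exp_neg_mul (r x : ℝ) :
    HasDerivAt (fun x => exp (-(r * x))) (-r * exp (-(r * x))) x := by
  have h : HasDerivAt (fun x : ℝ => -(r * x)) (-r) x := by
    simpa using (hasDerivAt_id x).const_mul (-r)
  simpa [mul_comm] using h.exp

/-- antiderivative of (a*x+b)*exp(-(r*x)) : F = -((a*x+b)/r + a/r²) e^{-rx} -/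
lemma hasDerivAt_lin_antideriv {r : ℝ} (hr : r ≠ 0) (a b x : ℝ) :
    HasDerivAt (fun x => -((a * x + b) / r + a / r ^ 2) * exp (-(r * x)))
      ((a * x + b) * exp (-(r * x))) x := by
  have h1 : HasDerivAt (fun x : ℝ => -((a * x + b) / r + a / r ^ 2)) (-(a / r)) x := by
    have : HasDerivAt (fun x : ℝ => a * x + b) a x := by
      simpa using ((hasDerivAt_id x).const_mul a).add_const b
    exact ((this.div_const r).add_const (a / r ^ 2)).neg
  have : HasDerivAt (fun x => -((a * x + b) / r + a / r ^ 2) * exp (-(r * x)))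
      (-(a / r) * exp (-(r * x)) + -((a * x + b) / r + a / r ^ 2) * (-r * exp (-(r * x)))) x :=
    h1.mul (hasDerivAt_exp_neg_mul r x)
  convert this using 1
  field_simp
  ring

lemma lin_exp_integrableOn {r : ℝ} (hr : 0 < r) (a b c : ℝ) :
    IntegrableOn (fun x => (a * x + b) * exp (-(r * x))) (Ioi c) := by
  have hexp : IntegrableOn (fun x : ℝ => exp (-(r * x))) (Ioi c) := by
    simpa [neg_mul] using exp_neg_integrableOn_Ioi c hr
  have hx : IntegrableOn (fun x : ℝ => (1 * x + 0) * exp (-(r * x))) (Ioi (max c 0)) := by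
    apply integrableOn_Ioi_deriv_of_nonneg' (g := fun x => -((1 * x + 0) / r + 1 / r ^ 2) * exp (-(r * x)))
      (fun x _ => hasDerivAt_lin_antideriv hr.ne' 1 0 x)
      (fun x hx => mul_nonneg (by have := hx.out; have := le_max_right c (0:ℝ); nlinarith) (exp_pos _).le)
    have := tendsto_lin_exp_neg_mul hr (-(1/r)) (-(1/r^2))
    convert this using 2 with x
    ring
  have hx' : IntegrableOn (fun x : ℝ => x * exp (-(r * x))) (Ioi c) := by
    simp only [one_mul, add_zero] at hx
    have hcompact : IntegrableOn (fun x : ℝ => x * exp (-(r * x))) (Ioc c (max c 0)) :=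
      (Continuous.mul continuous_id (by continuity)).integrableOn_Ioc
    have := hcompact.union hx
    apply this.mono_set
    rw [Ioc_union_Ioi_eq_Ioi (le_max_left _ _)]
  have : IntegrableOn (fun x : ℝ => a * (x * exp (-(r * x))) + b * exp (-(r * x))) (Ioi c) :=
    (hx'.const_mul a).add (hexp.const_mul b)
  apply this.congr_fun ?_ measurableSet_Ioi
  intro x _; ring

lemma lin_exp_integral {r : ℝ} (hr : 0 < r) (a b c : ℝ) :
    (∫ x in Ioi c, (a * x + b) * exp (-(r * x))) =
      ((a * c + b) / r + a / r ^ 2) * exp (-(r * c)) := by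
  have := integral_Ioi_of_hasDerivAt_of_tendsto
    (f := fun x => -((a * x + b) / r + a / r ^ 2) * exp (-(r * x)))
    (f' := fun x => (a * x + b) * exp (-(r * x))) (a := c) (m := 0)
    (by apply Continuous.continuousWithinAt; continuity)
    (fun x _ => hasDerivAt_lin_antideriv hr.ne' a b x)
    (lin_exp_integrableOn hr a b c) ?_
  · rw [this]; ring
  · have := tendsto_lin_exp_neg_mul hr (-(a/r)) (-(b / r + a / r ^ 2))
    convert this using 2 with x
    ring

end
noncomputable section

lemma lin_exp_intervalIntegrable {r : ℝ} (a b c d : ℝ) :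
    IntervalIntegrable (fun x => (a * x + b) * exp (-(r * x))) volume c d :=
  (Continuous.mul (by continuity) (by continuity)).intervalIntegrable c d

lemma lin_exp_integral_Ioc {r : ℝ} (hr : 0 < r) (a b : ℝ) {c : ℝ} (hc : 0 ≤ c) :
    (∫ x in Ioc 0 c, (a * x + b) * exp (-(r * x))) =
      (b / r + a / r ^ 2) - ((a * c + b) / r + a / r ^ 2) * exp (-(r * c)) := by
  rw [← intervalIntegral.integral_of_le hc]
  have := intervalIntegral.integral_eq_sub_of_hasDerivAt
    (f := fun x => -((a * x + b) / r + a / r ^ 2) * exp (-(r * x)))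
    (f' := fun x => (a * x + b) * exp (-(r * x))) (a := 0) (b := c)
    (fun x _ => hasDerivAt_lin_antideriv hr.ne' a b x)
    (lin_exp_intervalIntegrable a b 0 c)
  rw [this]
  simp only [mul_zero, add_zero, neg_zero, exp_zero, neg_mul, mul_one]
  ring

lemma measurable_expDensity (r : ℝ) :
    Measurable (fun x : ℝ => ENNReal.ofReal (r * exp (-(r * x)))) := by fun_prop

/-- The workhorse: lintegral over `eM r` of `ofReal ∘ f` equals `ofReal` of the
weighted Lebesgue integral. -/
lemma eM_lint {r : ℝ} (hr : 0 < r) {f : ℝ → ℝ} (hf : Measurable f)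
    (hnn : ∀ x ∈ Ioi (0:ℝ), 0 ≤ f x) {v : ℝ}
    (hint : IntegrableOn (fun x => f x * (r * exp (-(r * x)))) (Ioi 0))
    (hval : (∫ x in Ioi 0, f x * (r * exp (-(r * x)))) = v) :
    ∫⁻ x, ENNReal.ofReal (f x) ∂(eM r) = ENNReal.ofReal v := by
  rw [eM, lintegral_withDensity_eq_lintegral_mul _ (measurable_expDensity r) hf.ennreal_ofReal]
  have h1 : ∫⁻ x, ((fun x : ℝ => ENNReal.ofReal (r * exp (-(r * x)))) *
      (fun x => ENNReal.ofReal (f x))) x ∂(volume.restrict (Ioi 0)) =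
      ∫⁻ x, ENNReal.ofReal (f x * (r * exp (-(r * x)))) ∂(volume.restrict (Ioi 0)) := by
    apply lintegral_congr_ae
    filter_upwards with x
    simp only [Pi.mul_apply]
    rw [← ENNReal.ofReal_mul (show (0:ℝ) ≤ r * exp (-(r * x)) by positivity)]
    congr 1; ring
  rw [h1, ← ofReal_integral_eq_lintegral_ofReal hint ?_, hval]
  refine (ae_restrict_iff' measurableSet_Ioi).2 (ae_of_all _ fun x hx => ?_)
  exact mul_nonneg (hnn x hx) (by positivity)

lemma eM_univ {r : ℝ} (hr : 0 < r) : eM r univ = 1 := by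
  have h := eM_lint hr (f := fun _ => 1) measurable_const (fun x _ => zero_le_one)
    (v := 1) ?_ ?_
  · simpa using h
  · have := lin_exp_integrableOn hr 0 r 0
    apply this.congr_fun ?_ measurableSet_Ioi
    intro x _; ring
  · have h2 : (∫ x in Ioi (0:ℝ), (1:ℝ) * (r * exp (-(r * x)))) =
        ∫ x in Ioi (0:ℝ), (0 * x + r) * exp (-(r * x)) := by
      apply integral_congr_ae; filter_upwards with x; ring
    rw [h2, lin_exp_integral hr 0 r 0]
    field_simp
    simp only [zero_mul, neg_zero, exp_zero, mul_one]
    ring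

instance eM_prob {r : ℝ} [hr : Fact (0 < r)] : IsProbabilityMeasure (eM r) :=
  ⟨eM_univ hr.out⟩

lemma eM_pos_ae (r : ℝ) : ∀ᵐ x ∂(eM r), 0 < x := by
  rw [ae_iff]
  have h0 : eM r (Iic 0) = 0 := by
    apply withDensity_absolutelyContinuous _ _
    rw [Measure.restrict_apply measurableSet_Iic, Set.Iic_inter_Ioi, Set.Ioc_self]
    simp
  exact measure_mono_null (fun x hx => by simpa using hx) h0

end
noncomputable section

lemma lint_ofReal_Ioc {r : ℝ} (hr : 0 < r) {a : ℝ} (ha : 0 ≤ a) :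
    ∫⁻ x in Ioc 0 a, ENNReal.ofReal (r * exp (-(r * x))) ∂volume =
      ENNReal.ofReal (1 - exp (-(r * a))) := by
  rw [← ofReal_integral_eq_lintegral_ofReal]
  · congr 1
    have h2 : (∫ x in Ioc (0:ℝ) a, r * exp (-(r * x))) =
        ∫ x in Ioc (0:ℝ) a, (0 * x + r) * exp (-(r * x)) := by
      apply integral_congr_ae; filter_upwards with x; ring
    rw [h2, lin_exp_integral_Ioc hr 0 r ha]
    field_simp
    ring
  · apply ((lin_exp_intervalIntegrable (r := r) 0 r 0 a).1.congr_fun ?_ measurableSet_Ioc)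
    · intro x _; ring
  · filter_upwards with x
    positivity

lemma map_eq_eM {Ω : Type*} [MeasurableSpace Ω] (P : Measure Ω) [IsProbabilityMeasure P]
    {r : ℝ} (hr : 0 < r) {X : Ω → ℝ} (hX : IsExpRV P r X) : P.map X = eM r := by
  obtain ⟨hXm, htail⟩ := hX
  have : IsProbabilityMeasure (P.map X) := Measure.isProbabilityMeasure_map hXm.aemeasurable
  have : IsProbabilityMeasure (eM r) := ⟨eM_univ hr⟩
  have hmeas : ∀ t : ℝ, MeasurableSet {ω | X ω > t} := fun t =>
    measurableSet_lt measurable_const hXm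
  have hzero : P {ω | X ω > 0} = 1 := by
    rw [htail 0 le_rfl]; simp
  apply Measure.ext_of_Iic
  intro a
  rw [Measure.map_apply hXm measurableSet_Iic]
  have heM : eM r (Iic a) = ∫⁻ x in Ioc 0 a, ENNReal.ofReal (r * exp (-(r * x))) ∂volume := by
    rw [eM, withDensity_apply _ measurableSet_Iic, Measure.restrict_restrict measurableSet_Iic,
      Set.Iic_inter_Ioi]
  rcases le_or_gt 0 a with ha | ha
  · have hset : X ⁻¹' Iic a = {ω | X ω > a}ᶜ := by
      ext ω; simp [not_lt]
    rw [hset, measure_compl (hmeas a) (measure_ne_top _ _), htail a ha,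
      heM, lint_ofReal_Ioc hr ha, measure_univ]
    rw [ENNReal.ofReal_sub _ (by positivity), ENNReal.ofReal_one, neg_mul]
  · have h1 : P (X ⁻¹' Iic a) = 0 := by
      apply measure_mono_null (fun ω hω => ?_) (show P {ω | X ω > 0}ᶜ = 0 by
        rw [measure_compl (hmeas 0) (measure_ne_top _ _), hzero, measure_univ, tsub_self])
      simp only [mem_preimage, mem_Iic] at hω
      simp only [mem_compl_iff, mem_setOf_eq, not_lt]
      linarith
    have h2 : Ioc (0:ℝ) a = ∅ := Ioc_eq_empty (by linarith)
    rw [h1, heM, h2]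
    simp

end
noncomputable section

lemma exp_mul_exp (s r x : ℝ) : exp (-(s * x)) * exp (-(r * x)) = exp (-((r + s) * x)) := by
  rw [← Real.exp_add]; ring_nf

lemma master_eq (r s a b d e : ℝ) (x : ℝ) :
    ((a * x + b) + (d * x + e) * exp (-(s * x))) * (r * exp (-(r * x))) =
      (a * r * x + b * r) * exp (-(r * x)) + (d * r * x + e * r) * exp (-((r + s) * x)) := by
  rw [← exp_mul_exp s r x]; ring

lemma master_integrableOn {r s : ℝ} (hr : 0 < r) (hs : 0 ≤ s) (a b d e : ℝ) :
    IntegrableOn (fun x => ((a * x + b) + (d * x + e) * exp (-(s * x))) *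
      (r * exp (-(r * x)))) (Ioi 0) := by
  have h1 := lin_exp_integrableOn hr (a * r) (b * r) 0
  have h2 := lin_exp_integrableOn (show 0 < r + s by linarith) (d * r) (e * r) 0
  have h3 : IntegrableOn (fun x => (a * r * x + b * r) * exp (-(r * x)) +
      (d * r * x + e * r) * exp (-((r + s) * x))) (Ioi 0) := h1.add h2
  apply h3.congr_fun ?_ measurableSet_Ioi
  intro x _
  exact (master_eq r s a b d e x).symm

lemma master_integral {r s : ℝ} (hr : 0 < r) (hs : 0 ≤ s) (a b d e : ℝ) :
    (∫ x in Ioi 0, ((a * x + b) + (d * x + e) * exp (-(s * x))) * (r * exp (-(r * x)))) =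
      (a / r + b) + (d * r / (r + s) ^ 2 + e * r / (r + s)) := by
  have hrs : 0 < r + s := by linarith
  have h1 : (∫ x in Ioi 0, ((a * x + b) + (d * x + e) * exp (-(s * x))) * (r * exp (-(r * x)))) =
      (∫ x in Ioi 0, (a * r * x + b * r) * exp (-(r * x))) +
        ∫ x in Ioi 0, (d * r * x + e * r) * exp (-((r + s) * x)) := by
    rw [← integral_add (lin_exp_integrableOn hr (a*r) (b*r) 0)
      (lin_exp_integrableOn hrs (d*r) (e*r) 0)]
    apply integral_congr_ae; filter_upwards with x
    exact master_eq r s a b d e x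
  rw [h1, lin_exp_integral hr (a*r) (b*r) 0, lin_exp_integral hrs (d*r) (e*r) 0]
  simp only [mul_zero, neg_zero, exp_zero, mul_one, zero_add]
  field_simp
  ring

lemma integral_Ioi_split {c : ℝ} (hc : 0 ≤ c) {g : ℝ → ℝ}
    (h1 : IntegrableOn g (Ioc 0 c)) (h2 : IntegrableOn g (Ioi c)) :
    IntegrableOn g (Ioi 0) ∧
      (∫ x in Ioi 0, g x) = (∫ x in Ioc 0 c, g x) + ∫ x in Ioi c, g x := by
  have hu : Ioc 0 c ∪ Ioi c = Ioi 0 := Ioc_union_Ioi_eq_Ioi hc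
  have hd : Disjoint (Ioc (0:ℝ) c) (Ioi c) := by
    apply Set.disjoint_left.2
    intro x hx hx'
    exact absurd hx.2 (not_le.2 hx')
  constructor
  · rw [← hu]; exact h1.union h2
  · rw [← hu, setIntegral_union hd measurableSet_Ioi h1 h2]

lemma lint_S1 {ν : ℝ} (hν : 0 < ν) {s₂ u : ℝ} (hs₂ : 0 ≤ s₂) (hu : 0 ≤ u) :
    ∫⁻ x, ENNReal.ofReal (s₂ + max (u - x) 0) ∂(eM ν) =
      ENNReal.ofReal (s₂ + u - 1/ν + exp (-(ν * u))/ν) := by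
  -- split the weighted integral at u
  have hmeas : Measurable fun x : ℝ => s₂ + max (u - x) 0 := by fun_prop
  have h1 : IntegrableOn (fun x => (s₂ + max (u - x) 0) * (ν * exp (-(ν * x)))) (Ioc 0 u) :=
    (Continuous.mul (by continuity) (by continuity)).integrableOn_Ioc
  have h2 : IntegrableOn (fun x => (s₂ + max (u - x) 0) * (ν * exp (-(ν * x)))) (Ioi u) := by
    apply ((lin_exp_integrableOn hν 0 (s₂ * ν) u).congr_fun ?_ measurableSet_Ioi)
    intro x hx
    simp only [mem_Ioi] at hx
    have hm : max (u - x) 0 = 0 := max_eq_right (by linarith)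
    simp only [hm]
    ring
  obtain ⟨hint, hsplit⟩ := integral_Ioi_split hu h1 h2
  apply eM_lint hν hmeas (fun x _ => by positivity) hint
  rw [hsplit]
  have e1 : (∫ x in Ioc 0 u, (s₂ + max (u - x) 0) * (ν * exp (-(ν * x)))) =
      ∫ x in Ioc 0 u, (-ν * x + ν * (s₂ + u)) * exp (-(ν * x)) := by
    apply setIntegral_congr_fun measurableSet_Ioc
    intro x hx
    simp only [mem_Ioc] at hx
    have hm : max (u - x) 0 = u - x := max_eq_left (by linarith)
    simp only [hm]
    ring
  have e2 : (∫ x in Ioi u, (s₂ + max (u - x) 0) * (ν * exp (-(ν * x)))) =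
      ∫ x in Ioi u, (0 * x + s₂ * ν) * exp (-(ν * x)) := by
    apply setIntegral_congr_fun measurableSet_Ioi
    intro x hx
    simp only [mem_Ioi] at hx
    have hm : max (u - x) 0 = 0 := max_eq_right (by linarith)
    simp only [hm]
    ring
  rw [e1, e2, lin_exp_integral_Ioc hν (-ν) (ν * (s₂ + u)) hu, lin_exp_integral hν 0 (s₂ * ν) u]
  field_simp
  ring

end
noncomputable section

lemma lint_master {r s : ℝ} (hr : 0 < r) (hs : 0 ≤ s) (a b d e : ℝ)
    (hnn : ∀ x ∈ Ioi (0:ℝ), 0 ≤ (a * x + b) + (d * x + e) * exp (-(s * x))) :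
    ∫⁻ x, ENNReal.ofReal ((a * x + b) + (d * x + e) * exp (-(s * x))) ∂(eM r) =
      ENNReal.ofReal ((a / r + b) + (d * r / (r + s) ^ 2 + e * r / (r + s))) := by
  have hm : Measurable fun x : ℝ => (a * x + b) + (d * x + e) * exp (-(s * x)) := by fun_prop
  have hint : IntegrableOn (fun x => ((a * x + b) + (d * x + e) * exp (-(s * x))) *
      (r * exp (-(r * x)))) (Ioi 0) := master_integrableOn hr hs a b d e
  exact eM_lint hr hm hnn hint (master_integral hr hs a b d e)

lemma lint_S4 {l ν : ℝ} (hl : 0 < l) (hν : 0 < ν) {K c₂ t : ℝ} (ht : 0 ≤ t)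
    (hc₂ : 0 ≤ c₂) (hc₂ν : c₂ * ν ≤ 1) (hKc : 0 ≤ K + c₂) :
    ∫⁻ x, ENNReal.ofReal (K + max (x - t) 0 + c₂ * exp (-(ν * max (x - t) 0))) ∂(eM l) =
      ENNReal.ofReal ((K + c₂) + (1/l - c₂ * ν / (l + ν)) * exp (-(l * t))) := by
  have hlν : 0 < l + ν := by linarith
  have hnn : ∀ x ∈ Ioi (0:ℝ), 0 ≤ K + max (x - t) 0 + c₂ * exp (-(ν * max (x - t) 0)) := by
    intro x _
    set z := max (x - t) 0 with hzdef
    have hz : 0 ≤ z := le_max_right _ 0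
    have h₁ : 0 ≤ c₂ * (exp (-(ν * z)) - 1 + ν * z) :=
      mul_nonneg hc₂ (by nlinarith [Real.add_one_le_exp (-(ν * z))])
    have h₂ : 0 ≤ z * (1 - c₂ * ν) := mul_nonneg hz (by linarith)
    nlinarith [h₁, h₂]
  have hmeas : Measurable fun x : ℝ =>
      K + max (x - t) 0 + c₂ * exp (-(ν * max (x - t) 0)) := by fun_prop
  have h1 : IntegrableOn (fun x => (K + max (x - t) 0 + c₂ * exp (-(ν * max (x - t) 0))) *
      (l * exp (-(l * x)))) (Ioc 0 t) :=
    (Continuous.mul (by continuity) (by continuity)).integrableOn_Ioc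
  have key : ∀ x ∈ Ioi t, (K + max (x - t) 0 + c₂ * exp (-(ν * max (x - t) 0))) *
      (l * exp (-(l * x))) =
      (l * x + l * (K - t)) * exp (-(l * x)) + (0 * x + c₂ * l * exp (ν * t)) *
        exp (-((l + ν) * x)) := by
    intro x hx
    simp only [mem_Ioi] at hx
    have hm : max (x - t) 0 = x - t := max_eq_left (by linarith)
    have he : exp (-(ν * (x - t))) = exp (ν * t) * exp (-(ν * x)) := by
      rw [← exp_add]; ring_nf
    have he2 := exp_mul_exp ν l x
    simp only [hm]
    rw [he]
    rw [← he2]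
    ring
  have h2sum : IntegrableOn (fun x => (l * x + l * (K - t)) * exp (-(l * x)) +
      (0 * x + c₂ * l * exp (ν * t)) * exp (-((l + ν) * x))) (Ioi t) :=
    (lin_exp_integrableOn hl l (l * (K - t)) t).add
      (lin_exp_integrableOn hlν 0 (c₂ * l * exp (ν * t)) t)
  have h2 : IntegrableOn (fun x => (K + max (x - t) 0 + c₂ * exp (-(ν * max (x - t) 0))) *
      (l * exp (-(l * x)))) (Ioi t) := by
    apply h2sum.congr_fun ?_ measurableSet_Ioi
    intro x hx
    exact (key x hx).symm
  obtain ⟨hint, hsplit⟩ := integral_Ioi_split ht h1 h2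
  apply eM_lint hl hmeas hnn hint
  rw [hsplit]
  have e1 : (∫ x in Ioc 0 t, (K + max (x - t) 0 + c₂ * exp (-(ν * max (x - t) 0))) *
      (l * exp (-(l * x)))) = ∫ x in Ioc 0 t, (0 * x + l * (K + c₂)) * exp (-(l * x)) := by
    apply setIntegral_congr_fun measurableSet_Ioc
    intro x hx
    simp only [mem_Ioc] at hx
    have hm : max (x - t) 0 = 0 := max_eq_right (by linarith)
    simp only [hm]
    simp only [mul_zero, neg_zero, exp_zero]
    ring
  have e2 : (∫ x in Ioi t, (K + max (x - t) 0 + c₂ * exp (-(ν * max (x - t) 0))) *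
      (l * exp (-(l * x)))) = (∫ x in Ioi t, (l * x + l * (K - t)) * exp (-(l * x))) +
      ∫ x in Ioi t, (0 * x + c₂ * l * exp (ν * t)) * exp (-((l + ν) * x)) := by
    rw [← integral_add (lin_exp_integrableOn hl l (l * (K - t)) t)
      (lin_exp_integrableOn hlν 0 (c₂ * l * exp (ν * t)) t)]
    apply setIntegral_congr_fun measurableSet_Ioi
    intro x hx
    exact key x hx
  rw [e1, e2, lin_exp_integral_Ioc hl 0 (l * (K + c₂)) ht, lin_exp_integral hl l (l * (K - t)) t,
    lin_exp_integral hlν 0 (c₂ * l * exp (ν * t)) t]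
  have he3 : exp (ν * t) * exp (-((l + ν) * t)) = exp (-(l * t)) := by
    rw [← exp_add]; ring_nf
  have he3' : exp (-((l + ν) * t)) = exp (-(l * t)) / exp (ν * t) := by
    rw [eq_div_iff (exp_ne_zero _), mul_comm]; exact he3
  rw [he3']
  field_simp
  ring

end
noncomputable section

lemma gnonneg {ν u : ℝ} (hν : 0 < ν) (hu : 0 ≤ u) :
    0 ≤ u - 1/ν + exp (-(ν * u))/ν := by
  have h := Real.add_one_le_exp (-(ν * u))
  have h2 : (1 - ν * u)/ν ≤ exp (-(ν * u))/ν := by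
    gcongr
    linarith
  have h3 : (1 - ν * u)/ν = 1/ν - u := by field_simp
  linarith

lemma lint_xC {r : ℝ} (hr : 0 < r) {C : ℝ} (hC : 0 ≤ C) :
    ∫⁻ x, ENNReal.ofReal (x + C) ∂(eM r) = ENNReal.ofReal (1/r + C) := by
  have h := lint_master hr le_rfl 1 C 0 0 (fun x hx => by simp only [mem_Ioi] at hx; nlinarith)
  rw [show (fun x : ℝ => ENNReal.ofReal ((1 * x + C) + (0 * x + 0) * exp (-(0 * x)))) =
      fun x => ENNReal.ofReal (x + C) from funext fun x => congrArg _ (by ring)] at h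
  rw [h]
  congr 1
  field_simp
  ring

lemma lint_AB {r s : ℝ} (hr : 0 < r) (hs : 0 ≤ s) {A B : ℝ} (hA : 0 ≤ A) (hB : 0 ≤ B) :
    ∫⁻ x, ENNReal.ofReal (A + B * exp (-(s * x))) ∂(eM r) =
      ENNReal.ofReal (A + B * r / (r + s)) := by
  have h := lint_master hr hs 0 A 0 B (fun x hx => by
    have := mul_nonneg hB (exp_pos (-(s * x))).le
    nlinarith)
  rw [show (fun x : ℝ => ENNReal.ofReal ((0 * x + A) + (0 * x + B) * exp (-(s * x)))) =
      fun x => ENNReal.ofReal (A + B * exp (-(s * x))) from funext fun x => congrArg _ (by ring)]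
      at h
  rw [h]
  congr 1
  field_simp
  try ring

lemma lint_xAB {r s : ℝ} (hr : 0 < r) (hs : 0 ≤ s) {A B : ℝ} (hA : 0 ≤ A) (hB : 0 ≤ B) :
    ∫⁻ x, ENNReal.ofReal (x * (A + B * exp (-(s * x)))) ∂(eM r) =
      ENNReal.ofReal (A / r + B * r / (r + s) ^ 2) := by
  have h := lint_master hr hs A 0 B 0 (fun x hx => by
    simp only [mem_Ioi] at hx
    have := mul_nonneg (mul_nonneg hB hx.le) (exp_pos (-(s * x))).le
    nlinarith [mul_nonneg hA hx.le])
  rw [show (fun x : ℝ => ENNReal.ofReal ((A * x + 0) + (B * x + 0) * exp (-(s * x)))) =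
      fun x => ENNReal.ofReal (x * (A + B * exp (-(s * x)))) from
      funext fun x => congrArg _ (by ring)] at h
  rw [h]
  congr 1
  field_simp
  try ring

lemma lint_id {r : ℝ} (hr : 0 < r) :
    ∫⁻ x, ENNReal.ofReal x ∂(eM r) = ENNReal.ofReal (1/r) := by
  have h := lint_xC hr (C := 0) le_rfl
  simpa using h

lemma ae_prod_mk {A B : Type*} [MeasurableSpace A] [MeasurableSpace B]
    {μ : Measure A} {ν : Measure B} [SFinite μ] [SFinite ν] {p : A → Prop} {q : B → Prop}
    (hp : ∀ᵐ x ∂μ, p x) (hq : ∀ᵐ y ∂ν, q y) :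
    ∀ᵐ z ∂(μ.prod ν), p z.1 ∧ q z.2 := by
  rw [ae_iff] at hp hq ⊢
  have hsub : {z : A × B | ¬ (p z.1 ∧ q z.2)} ⊆
      ({x | ¬ p x} ×ˢ univ) ∪ (univ ×ˢ {y | ¬ q y}) := by
    intro z hz
    simp only [mem_setOf_eq, not_and_or] at hz
    rcases hz with h | h
    · exact Or.inl ⟨h, mem_univ _⟩
    · exact Or.inr ⟨mem_univ _, h⟩
  apply measure_mono_null hsub
  apply measure_union_null
  · rw [Measure.prod_prod, hp, zero_mul]
  · rw [Measure.prod_prod, hq, mul_zero]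

end
noncomputable section

lemma lint_R {g m n : ℝ} (hg : 0 < g) (hm : 0 < m) (hn : 0 < n) {z : ℝ} (hz : 0 ≤ z) :
    ∫⁻ w : ℝ × (ℝ × ℝ), ENNReal.ofReal (w.2.1 + max (w.1 + z - w.2.2) 0)
        ∂((eM g).prod ((eM m).prod (eM n))) =
      ENNReal.ofReal ((1/m + 1/g - 1/n) + z + (g/(n*(g+n))) * exp (-(n*z))) := by
  have : IsProbabilityMeasure (eM g) := ⟨eM_univ hg⟩
  have : IsProbabilityMeasure (eM m) := ⟨eM_univ hm⟩
  have : IsProbabilityMeasure (eM n) := ⟨eM_univ hn⟩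
  rw [lintegral_prod _ (by fun_prop)]
  -- inner over (s₂, t₂), for fixed s₁ > 0
  have hinner : ∀ s₁ : ℝ, 0 < s₁ →
      (∫⁻ v : ℝ × ℝ, ENNReal.ofReal (v.1 + max (s₁ + z - v.2) 0) ∂((eM m).prod (eM n))) =
      ENNReal.ofReal (1/m + ((s₁ + z) - 1/n + exp (-(n*(s₁ + z)))/n)) := by
    intro s₁ hs₁
    rw [lintegral_prod _ (by fun_prop)]
    have h1 : (fun s₂ => ∫⁻ t₂, ENNReal.ofReal (s₂ + max (s₁ + z - t₂) 0) ∂(eM n)) =ᵐ[eM m]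
        fun s₂ => ENNReal.ofReal (s₂ + ((s₁ + z) - 1/n + exp (-(n*(s₁+z)))/n)) := by
      filter_upwards [eM_pos_ae m] with s₂ hs₂
      rw [lint_S1 hn hs₂.le (by linarith)]
      exact congrArg _ (by ring)
    rw [lintegral_congr_ae h1, lint_xC hm (gnonneg hn (by linarith))]
  have h2 : (fun s₁ => ∫⁻ v : ℝ × ℝ, ENNReal.ofReal (v.1 + max (s₁ + z - v.2) 0)
      ∂((eM m).prod (eM n))) =ᵐ[eM g]
      fun s₁ => ENNReal.ofReal ((1 * s₁ + (1/m + z - 1/n)) +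
        (0 * s₁ + exp (-(n*z))/n) * exp (-(n * s₁))) := by
    filter_upwards [eM_pos_ae g] with s₁ hs₁
    rw [hinner s₁ hs₁]
    apply congrArg
    have he : exp (-(n*(s₁ + z))) = exp (-(n*z)) * exp (-(n*s₁)) := by
      rw [← exp_add]; ring_nf
    rw [he]; ring
  rw [lintegral_congr_ae h2, lint_master hg hn.le 1 (1/m + z - 1/n) 0 (exp (-(n*z))/n) ?hnn]
  · apply congrArg
    have hgn : g + n ≠ 0 := by positivity
    field_simp
    ring
  case hnn =>
    intro x hx
    simp only [mem_Ioi] at hx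
    have he : exp (-(n*z)) * exp (-(n * x)) = exp (-(n*(x + z))) := by
      rw [← exp_add]; ring_nf
    have hg2 := gnonneg hn (show 0 ≤ x + z by linarith)
    have h0 : 0 ≤ 1/m := by positivity
    have he2 : exp (-(n*z))/n * exp (-(n*x)) = exp (-(n*(x+z)))/n := by
      rw [div_mul_eq_mul_div, he]
    nlinarith [hg2, he2]

end
set_option maxHeartbeats 2000000

/-- In the stable M/M/1/∞ → M/M/1/∞ tandem with arrival rate `λ` and service rates
`γ` and `μ`: with `T ~ Exp(γ-λ)` the stationary system time at queue 1,
`X ~ Exp(λ)`, `S⁽¹⁾ ~ Exp(γ)`, `S⁽²⁾ ~ Exp(μ)`, `T⁽²⁾ ~ Exp(μ-λ)` independent, and the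
inter-departure time of the second queue given by the Lindley recursion
`Y = S⁽²⁾ + (S⁽¹⁾ + (X - T)⁺ - T⁽²⁾)⁺`, one has
`E[Y T] = 1/(γλ) + (λ/γ²)/(γ-λ) + (λ/(γμ))/(γ+μ-λ)` and
`Cov(Y, T) = (1/γ²)·((γ+μ)(λ-μ))/(μ(γ+μ-λ)) < 0`. -/
theorem tandem_cross_term
    {Ω : Type*} [MeasurableSpace Ω] (P : Measure Ω) [IsProbabilityMeasure P]
    (lam γ μ : ℝ) (hlam : 0 < lam) (hγ : lam < γ) (hμ : lam < μ)
    (T X S₁ S₂ T₂ : Ω → ℝ)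
    (hT : IsExpRV P (γ - lam) T) (hX : IsExpRV P lam X)
    (hS₁ : IsExpRV P γ S₁) (hS₂ : IsExpRV P μ S₂) (hT₂ : IsExpRV P (μ - lam) T₂)
    (hindep : iIndepFun (β := fun _ : Fin 5 => ℝ)
      ![T, X, S₁, S₂, T₂] P)
    (Y : Ω → ℝ) (hY : Y = fun ω => S₂ ω + max (S₁ ω + max (X ω - T ω) 0 - T₂ ω) 0) :
    (∫ ω, Y ω * T ω ∂P) =
        1 / (γ * lam) + (lam / γ ^ 2) / (γ - lam) + (lam / (γ * μ)) / (γ + μ - lam) ∧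
      (∫ ω, Y ω * T ω ∂P) - (∫ ω, Y ω ∂P) * (∫ ω, T ω ∂P) =
        (1 / γ ^ 2) * ((γ + μ) * (lam - μ)) / (μ * (γ + μ - lam)) ∧
      (1 / γ ^ 2) * ((γ + μ) * (lam - μ)) / (μ * (γ + μ - lam)) < 0 := by
  have hγ0 : 0 < γ := lt_trans hlam hγ
  have hμ0 : 0 < μ := lt_trans hlam hμ
  have hα : 0 < γ - lam := sub_pos.2 hγ
  have hν : 0 < μ - lam := sub_pos.2 hμ
  have hγν : 0 < γ + (μ - lam) := by linarith
  have hlv : 0 < lam + (μ - lam) := by linarith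
  have hmeas : ∀ i, Measurable (![T, X, S₁, S₂, T₂] i) := by
    intro i
    fin_cases i
    · exact hT.1
    · exact hX.1
    · exact hS₁.1
    · exact hS₂.1
    · exact hT₂.1
  have ipα : IsProbabilityMeasure (eM (γ - lam)) := ⟨eM_univ hα⟩
  have iplam : IsProbabilityMeasure (eM lam) := ⟨eM_univ hlam⟩
  have ipγ : IsProbabilityMeasure (eM γ) := ⟨eM_univ hγ0⟩
  have ipμ : IsProbabilityMeasure (eM μ) := ⟨eM_univ hμ0⟩
  have ipν : IsProbabilityMeasure (eM (μ - lam)) := ⟨eM_univ hν⟩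
  -- independence
  have hTX : IndepFun T X P := hindep.indepFun (show (0 : Fin 5) ≠ 1 by decide)
  have hS1p : IndepFun S₁ (fun ω => (S₂ ω, T₂ ω)) P :=
    (hindep.indepFun_prodMk hmeas 3 4 2 (by decide) (by decide)).symm
  have hbig : IndepFun (fun ω => (T ω, X ω)) (fun ω => (S₁ ω, (S₂ ω, T₂ ω))) P := by
    have h := hindep.indepFun_finset {0, 1} {2, 3, 4} (by decide) hmeas
    have hm1 : Measurable (fun v : (({0,1} : Finset (Fin 5)) → ℝ) =>
        (v ⟨0, by decide⟩, v ⟨1, by decide⟩)) := by fun_prop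
    have hm2 : Measurable (fun v : (({2,3,4} : Finset (Fin 5)) → ℝ) =>
        (v ⟨2, by decide⟩, (v ⟨3, by decide⟩, v ⟨4, by decide⟩))) := by fun_prop
    exact h.comp hm1 hm2
  -- identification of laws
  have hmT := map_eq_eM P hα hT
  have hmX := map_eq_eM P hlam hX
  have hmS1 := map_eq_eM P hγ0 hS₁
  have hmS2 := map_eq_eM P hμ0 hS₂
  have hmT2 := map_eq_eM P hν hT₂
  have hmTX : P.map (fun ω => (T ω, X ω)) = (eM (γ - lam)).prod (eM lam) := by
    rw [(indepFun_iff_map_prod_eq_prod_map_map hT.1.aemeasurable hX.1.aemeasurable).1 hTX,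
      hmT, hmX]
  have hmS2T2 : P.map (fun ω => (S₂ ω, T₂ ω)) = (eM μ).prod (eM (μ - lam)) := by
    rw [(indepFun_iff_map_prod_eq_prod_map_map hS₂.1.aemeasurable hT₂.1.aemeasurable).1
      (hindep.indepFun (show (3 : Fin 5) ≠ 4 by decide)), hmS2, hmT2]
  have hmR : P.map (fun ω => (S₁ ω, (S₂ ω, T₂ ω))) =
      (eM γ).prod ((eM μ).prod (eM (μ - lam))) := by
    rw [(indepFun_iff_map_prod_eq_prod_map_map hS₁.1.aemeasurable
      (hS₂.1.prodMk hT₂.1).aemeasurable).1 hS1p, hmS1, hmS2T2]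
  have hΦ : Measurable (fun ω => ((T ω, X ω), (S₁ ω, (S₂ ω, T₂ ω)))) :=
    (hT.1.prodMk hX.1).prodMk (hS₁.1.prodMk (hS₂.1.prodMk hT₂.1))
  have hmM : P.map (fun ω => ((T ω, X ω), (S₁ ω, (S₂ ω, T₂ ω)))) =
      ((eM (γ - lam)).prod (eM lam)).prod ((eM γ).prod ((eM μ).prod (eM (μ - lam)))) := by
    rw [(indepFun_iff_map_prod_eq_prod_map_map (hT.1.prodMk hX.1).aemeasurable
      (hS₁.1.prodMk (hS₂.1.prodMk hT₂.1)).aemeasurable).1 hbig, hmTX, hmR]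
  -- E[T]
  have hET : (∫ ω, T ω ∂P) = 1 / (γ - lam) := by
    have h1 : (∫ ω, T ω ∂P) = ∫ x, x ∂(P.map T) :=
      (integral_map hT.1.aemeasurable measurable_id.aestronglyMeasurable).symm
    rw [h1, hmT, integral_eq_lintegral_of_nonneg_ae
      (((eM_pos_ae (γ - lam)).mono) fun x hx => hx.le) measurable_id.aestronglyMeasurable]
    rw [lint_id hα, ENNReal.toReal_ofReal (by positivity)]
  -- constants
  have hc₂ : 0 ≤ γ / ((μ - lam) * (γ + (μ - lam))) := by positivity
  have hc₂ν : (γ / ((μ - lam) * (γ + (μ - lam)))) * (μ - lam) ≤ 1 := by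
    rw [div_mul_eq_mul_div, div_le_one (by positivity)]
    nlinarith
  have hKc : 0 ≤ (1/μ + 1/γ - 1/(μ - lam)) + γ / ((μ - lam) * (γ + (μ - lam))) := by
    have he : (1/μ + 1/γ - 1/(μ - lam)) + γ / ((μ - lam) * (γ + (μ - lam))) =
        1/μ + (1/γ - 1/(γ + (μ - lam))) := by
      field_simp
      ring
    rw [he]
    have h2 : 1/(γ + (μ - lam)) ≤ 1/γ := by
      apply one_div_le_one_div_of_le hγ0
      linarith
    have h3 : 0 ≤ 1/μ := by positivity
    linarith
  have hB : 0 ≤ 1/lam - (γ / ((μ - lam) * (γ + (μ - lam)))) * (μ - lam) / (lam + (μ - lam)) := by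
    have key : (γ / ((μ - lam) * (γ + (μ - lam)))) * (μ - lam) / (lam + (μ - lam)) =
        γ / ((γ + (μ - lam)) * (lam + (μ - lam))) := by
      field_simp
    rw [key, sub_nonneg, div_le_div_iff₀ (by positivity) hlam]
    nlinarith
  -- pipelines
  have hGm : Measurable (fun p : (ℝ × ℝ) × (ℝ × (ℝ × ℝ)) =>
      (p.2.2.1 + max (p.2.1 + max (p.1.2 - p.1.1) 0 - p.2.2.2) 0) * p.1.1) := by fun_prop
  have hG'm : Measurable (fun p : (ℝ × ℝ) × (ℝ × (ℝ × ℝ)) =>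
      p.2.2.1 + max (p.2.1 + max (p.1.2 - p.1.1) 0 - p.2.2.2) 0) := by fun_prop
  have haePos : ∀ᵐ p ∂(((eM (γ - lam)).prod (eM lam)).prod
      ((eM γ).prod ((eM μ).prod (eM (μ - lam))))),
      (0 < p.1.1 ∧ 0 < p.1.2) ∧ (0 < p.2.1 ∧ (0 < p.2.2.1 ∧ 0 < p.2.2.2)) :=
    ae_prod_mk (ae_prod_mk (eM_pos_ae _) (eM_pos_ae _))
      (ae_prod_mk (eM_pos_ae _) (ae_prod_mk (eM_pos_ae _) (eM_pos_ae _)))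
  have hEYT : (∫ ω, Y ω * T ω ∂P) =
      ((1/μ + 1/γ - 1/(μ - lam)) + γ / ((μ - lam) * (γ + (μ - lam)))) / (γ - lam) +
        (1/lam - (γ / ((μ - lam) * (γ + (μ - lam)))) * (μ - lam) / (lam + (μ - lam))) *
          (γ - lam) / ((γ - lam) + lam) ^ 2 := by
    have e1 : (∫ ω, Y ω * T ω ∂P) = ∫ p,
        (p.2.2.1 + max (p.2.1 + max (p.1.2 - p.1.1) 0 - p.2.2.2) 0) * p.1.1
        ∂(P.map (fun ω => ((T ω, X ω), (S₁ ω, (S₂ ω, T₂ ω))))) := by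
      rw [integral_map hΦ.aemeasurable hGm.aestronglyMeasurable]
      apply integral_congr_ae
      filter_upwards with ω
      rw [hY]
    rw [e1, hmM, integral_eq_lintegral_of_nonneg_ae (haePos.mono fun p hp =>
      mul_nonneg (add_nonneg hp.2.2.1.le (le_max_right _ 0)) hp.1.1.le)
      hGm.aestronglyMeasurable]
    have hL : (∫⁻ p, ENNReal.ofReal ((p.2.2.1 +
        max (p.2.1 + max (p.1.2 - p.1.1) 0 - p.2.2.2) 0) * p.1.1)
        ∂(((eM (γ - lam)).prod (eM lam)).prod ((eM γ).prod ((eM μ).prod (eM (μ - lam)))))) =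
        ENNReal.ofReal (((1/μ + 1/γ - 1/(μ - lam)) + γ / ((μ - lam) * (γ + (μ - lam)))) /
          (γ - lam) + (1/lam - (γ / ((μ - lam) * (γ + (μ - lam)))) * (μ - lam) /
            (lam + (μ - lam))) * (γ - lam) / ((γ - lam) + lam) ^ 2) := by
      rw [lintegral_prod _ hGm.ennreal_ofReal.aemeasurable]
      have step1 : ∀ q : ℝ × ℝ, 0 < q.1 →
          (∫⁻ w : ℝ × (ℝ × ℝ), ENNReal.ofReal ((w.2.1 +
            max (w.1 + max (q.2 - q.1) 0 - w.2.2) 0) * q.1)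
            ∂((eM γ).prod ((eM μ).prod (eM (μ - lam))))) =
          ENNReal.ofReal (q.1 * ((1/μ + 1/γ - 1/(μ - lam)) + max (q.2 - q.1) 0 +
            (γ / ((μ - lam) * (γ + (μ - lam)))) * exp (-((μ - lam) * max (q.2 - q.1) 0)))) := by
        intro q hq
        have e : (fun w : ℝ × (ℝ × ℝ) => ENNReal.ofReal ((w.2.1 +
            max (w.1 + max (q.2 - q.1) 0 - w.2.2) 0) * q.1)) =
            fun w => ENNReal.ofReal q.1 * ENNReal.ofReal (w.2.1 +
              max (w.1 + max (q.2 - q.1) 0 - w.2.2) 0) := by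
          funext w
          rw [mul_comm (w.2.1 + max (w.1 + max (q.2 - q.1) 0 - w.2.2) 0) q.1,
            ENNReal.ofReal_mul hq.le]
        rw [e, lintegral_const_mul' _ _ ENNReal.ofReal_ne_top,
          lint_R hγ0 hμ0 hν (le_max_right _ 0), ← ENNReal.ofReal_mul hq.le]
      have hq1 : (fun q : ℝ × ℝ => ∫⁻ w : ℝ × (ℝ × ℝ), ENNReal.ofReal ((w.2.1 +
          max (w.1 + max (q.2 - q.1) 0 - w.2.2) 0) * q.1)
          ∂((eM γ).prod ((eM μ).prod (eM (μ - lam)))))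
          =ᵐ[(eM (γ - lam)).prod (eM lam)]
          fun q => ENNReal.ofReal (q.1 * ((1/μ + 1/γ - 1/(μ - lam)) + max (q.2 - q.1) 0 +
            (γ / ((μ - lam) * (γ + (μ - lam)))) * exp (-((μ - lam) * max (q.2 - q.1) 0)))) := by
        filter_upwards [ae_prod_mk (eM_pos_ae (γ - lam)) (eM_pos_ae lam)] with q hq
        exact step1 q hq.1
      rw [lintegral_congr_ae hq1, lintegral_prod _ (by fun_prop)]
      have step2 : ∀ t : ℝ, 0 < t →
          (∫⁻ x, ENNReal.ofReal (t * ((1/μ + 1/γ - 1/(μ - lam)) + max (x - t) 0 +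
            (γ / ((μ - lam) * (γ + (μ - lam)))) * exp (-((μ - lam) * max (x - t) 0))))
            ∂(eM lam)) =
          ENNReal.ofReal (t * (((1/μ + 1/γ - 1/(μ - lam)) +
            γ / ((μ - lam) * (γ + (μ - lam)))) +
            (1/lam - (γ / ((μ - lam) * (γ + (μ - lam)))) * (μ - lam) / (lam + (μ - lam))) *
              exp (-(lam * t)))) := by
        intro t ht
        have e : (fun x : ℝ => ENNReal.ofReal (t * ((1/μ + 1/γ - 1/(μ - lam)) +
            max (x - t) 0 + (γ / ((μ - lam) * (γ + (μ - lam)))) *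
              exp (-((μ - lam) * max (x - t) 0))))) =
            fun x => ENNReal.ofReal t * ENNReal.ofReal ((1/μ + 1/γ - 1/(μ - lam)) +
              max (x - t) 0 + (γ / ((μ - lam) * (γ + (μ - lam)))) *
                exp (-((μ - lam) * max (x - t) 0))) :=
          funext fun x => ENNReal.ofReal_mul ht.le
        rw [e, lintegral_const_mul' _ _ ENNReal.ofReal_ne_top,
          lint_S4 hlam hν ht.le hc₂ hc₂ν hKc, ← ENNReal.ofReal_mul ht.le]
      have hq2 : (fun t : ℝ => ∫⁻ x, ENNReal.ofReal (t * ((1/μ + 1/γ - 1/(μ - lam)) +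
          max (x - t) 0 + (γ / ((μ - lam) * (γ + (μ - lam)))) *
            exp (-((μ - lam) * max (x - t) 0)))) ∂(eM lam))
          =ᵐ[eM (γ - lam)]
          fun t => ENNReal.ofReal (t * (((1/μ + 1/γ - 1/(μ - lam)) +
            γ / ((μ - lam) * (γ + (μ - lam)))) +
            (1/lam - (γ / ((μ - lam) * (γ + (μ - lam)))) * (μ - lam) / (lam + (μ - lam))) *
              exp (-(lam * t)))) := by
        filter_upwards [eM_pos_ae (γ - lam)] with t ht
        exact step2 t ht
      rw [lintegral_congr_ae hq2, lint_xAB hα hlam.le hKc hB]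
    rw [hL, ENNReal.toReal_ofReal (add_nonneg (div_nonneg hKc hα.le)
      (div_nonneg (mul_nonneg hB hα.le) (by positivity)))]
  have hEY : (∫ ω, Y ω ∂P) =
      ((1/μ + 1/γ - 1/(μ - lam)) + γ / ((μ - lam) * (γ + (μ - lam)))) +
        (1/lam - (γ / ((μ - lam) * (γ + (μ - lam)))) * (μ - lam) / (lam + (μ - lam))) *
          (γ - lam) / ((γ - lam) + lam) := by
    have e1 : (∫ ω, Y ω ∂P) = ∫ p,
        (p.2.2.1 + max (p.2.1 + max (p.1.2 - p.1.1) 0 - p.2.2.2) 0)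
        ∂(P.map (fun ω => ((T ω, X ω), (S₁ ω, (S₂ ω, T₂ ω))))) := by
      rw [integral_map hΦ.aemeasurable hG'm.aestronglyMeasurable]
      apply integral_congr_ae
      filter_upwards with ω
      rw [hY]
    rw [e1, hmM, integral_eq_lintegral_of_nonneg_ae (haePos.mono fun p hp =>
      add_nonneg hp.2.2.1.le (le_max_right _ 0)) hG'm.aestronglyMeasurable]
    have hL : (∫⁻ p, ENNReal.ofReal (p.2.2.1 +
        max (p.2.1 + max (p.1.2 - p.1.1) 0 - p.2.2.2) 0)
        ∂(((eM (γ - lam)).prod (eM lam)).prod ((eM γ).prod ((eM μ).prod (eM (μ - lam)))))) =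
        ENNReal.ofReal (((1/μ + 1/γ - 1/(μ - lam)) + γ / ((μ - lam) * (γ + (μ - lam)))) +
          (1/lam - (γ / ((μ - lam) * (γ + (μ - lam)))) * (μ - lam) / (lam + (μ - lam))) *
            (γ - lam) / ((γ - lam) + lam)) := by
      rw [lintegral_prod _ hG'm.ennreal_ofReal.aemeasurable]
      have hq1 : (fun q : ℝ × ℝ => ∫⁻ w : ℝ × (ℝ × ℝ), ENNReal.ofReal (w.2.1 +
          max (w.1 + max (q.2 - q.1) 0 - w.2.2) 0)
          ∂((eM γ).prod ((eM μ).prod (eM (μ - lam))))) =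
          fun q => ENNReal.ofReal ((1/μ + 1/γ - 1/(μ - lam)) + max (q.2 - q.1) 0 +
            (γ / ((μ - lam) * (γ + (μ - lam)))) * exp (-((μ - lam) * max (q.2 - q.1) 0))) := by
        funext q
        exact lint_R hγ0 hμ0 hν (le_max_right _ 0)
      rw [hq1, lintegral_prod _ (by fun_prop)]
      have hq2 : (fun t : ℝ => ∫⁻ x, ENNReal.ofReal ((1/μ + 1/γ - 1/(μ - lam)) +
          max (x - t) 0 + (γ / ((μ - lam) * (γ + (μ - lam)))) *
            exp (-((μ - lam) * max (x - t) 0))) ∂(eM lam))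
          =ᵐ[eM (γ - lam)]
          fun t => ENNReal.ofReal (((1/μ + 1/γ - 1/(μ - lam)) +
            γ / ((μ - lam) * (γ + (μ - lam)))) +
            (1/lam - (γ / ((μ - lam) * (γ + (μ - lam)))) * (μ - lam) / (lam + (μ - lam))) *
              exp (-(lam * t))) := by
        filter_upwards [eM_pos_ae (γ - lam)] with t ht
        exact lint_S4 hlam hν ht.le hc₂ hc₂ν hKc
      rw [lintegral_congr_ae hq2, lint_AB hα hlam.le hKc hB]
    rw [hL, ENNReal.toReal_ofReal (add_nonneg hKc
      (div_nonneg (mul_nonneg hB hα.le) (by positivity)))]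
  -- final algebra
  have n1 : γ ≠ 0 := hγ0.ne'
  have n2 : lam ≠ 0 := hlam.ne'
  have n3 : μ ≠ 0 := hμ0.ne'
  have n4 : γ - lam ≠ 0 := hα.ne'
  have n5 : μ - lam ≠ 0 := hν.ne'
  have n6 : γ + (μ - lam) ≠ 0 := hγν.ne'
  have n7 : lam + (μ - lam) ≠ 0 := hlv.ne'
  have n8 : γ + μ - lam ≠ 0 := by intro h; apply n6; linarith
  refine ⟨?_, ?_, ?_⟩
  · rw [hEYT]
    field_simp
    ring
  · rw [hEYT, hEY, hET]
    field_simp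
    ring
  · apply div_neg_of_neg_of_pos
    · apply mul_neg_of_pos_of_neg (by positivity)
      exact mul_neg_of_pos_of_neg (by positivity) (by linarith)
    · exact mul_pos hμ0 (by linarith)
end
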